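/- arXiv:1502.02247 — 14 statements merged into one kernel-verified Lean document; each statement's English description precedes it below -/
import Mathlib

section
/- Let 𝓛 be a real c×c matrix whose off-diagonal entries are nonpositive and whose row sums and column sums are all zero. Then for every vector γ ∈ ℝ^c one has γᵀ 𝓛 Exp(γ) ≥ 0, and equality holds if and only if γ_i = γ_j for every pair of indices i ≠ j with 𝓛_{ij} ≠ 0. -/
open Matrix

/-- Fundamental inequality for balanced Laplacian matrices (Proposition 1):
for a real `c × c` matrix `L` with nonpositive off-diagonal entries and zero row
and column sums, `γᵀ L Exp(γ) ≥ 0`, with equality iff `γ` is constant on every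
edge of the graph defined by the nonzero off-diagonal entries of `L`. -/
theorem stmt_0 (c : ℕ) (L : Matrix (Fin c) (Fin c) ℝ)
    (hoff : ∀ i j, i ≠ j → L i j ≤ 0)
    (hrow : ∀ i, ∑ j, L i j = 0)
    (hcol : ∀ j, ∑ i, L i j = 0)
    (γ : Fin c → ℝ) :
    0 ≤ γ ⬝ᵥ L.mulVec (fun j => Real.exp (γ j)) ∧
    (γ ⬝ᵥ L.mulVec (fun j => Real.exp (γ j)) = 0 ↔
      ∀ i j, i ≠ j → L i j ≠ 0 → γ i = γ j) := by
  set E : Fin c → ℝ := fun j => Real.exp (γ j) with hE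
  set F : Fin c → Fin c → ℝ := fun i j => (γ j - γ i) * E j - E j + E i with hF
  have hFeq : ∀ i j, F i j = E j * (Real.exp (γ i - γ j) - (γ i - γ j) - 1) := by
    intro i j
    have hj : E j ≠ 0 := (Real.exp_pos _).ne'
    simp only [hF, hE, Real.exp_sub]
    field_simp
    ring
  have hFnn : ∀ i j, 0 ≤ F i j := by
    intro i j
    rw [hFeq]
    have h := Real.add_one_le_exp (γ i - γ j)
    nlinarith [Real.exp_pos (γ j)]
  have hFzero : ∀ i j, F i j = 0 ↔ γ i = γ j := by
    intro i j
    rw [hFeq]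
    constructor
    · intro h
      by_contra hne
      have hx : γ i - γ j ≠ 0 := sub_ne_zero.mpr hne
      have := Real.add_one_lt_exp hx
      have hEj := Real.exp_pos (γ j)
      nlinarith
    · intro h
      rw [h]
      simp
  have hgnn : ∀ i j, 0 ≤ (-L i j) * F i j := by
    intro i j
    rcases eq_or_ne i j with rfl | hne
    · have : F i i = 0 := (hFzero i i).mpr rfl
      rw [this, mul_zero]
    · exact mul_nonneg (by linarith [hoff i j hne]) (hFnn i j)
  -- the key sum identity
  have key : γ ⬝ᵥ L.mulVec E = ∑ i, ∑ j, (-L i j) * F i j := by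
    have expand : ∀ i j, (-L i j) * F i j =
        γ i * (L i j * E j) - (γ j * E j) * L i j + E j * L i j - E i * L i j := by
      intro i j; simp only [hF]; ring
    simp only [expand, Finset.sum_add_distrib, Finset.sum_sub_distrib]
    have hA : ∑ i, ∑ j, (γ j * E j) * L i j = 0 := by
      rw [Finset.sum_comm]
      apply Finset.sum_eq_zero
      intro j _
      rw [← Finset.mul_sum, hcol j, mul_zero]
    have hB : ∑ i : Fin c, ∑ j, E j * L i j = 0 := by
      rw [Finset.sum_comm]
      apply Finset.sum_eq_zero
      intro j _
      rw [← Finset.mul_sum, hcol j, mul_zero]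
    have hC : ∑ i, ∑ j, E i * L i j = 0 := by
      apply Finset.sum_eq_zero
      intro i _
      rw [← Finset.mul_sum, hrow i, mul_zero]
    rw [hA, hB, hC]
    simp only [sub_zero, add_zero]
    simp [dotProduct, mulVec, Finset.mul_sum]
  constructor
  · rw [key]
    exact Finset.sum_nonneg fun i _ => Finset.sum_nonneg fun j _ => hgnn i j
  · rw [key]
    constructor
    · intro h i j hne hL
      have h1 := (Finset.sum_eq_zero_iff_of_nonneg
        (fun i _ => Finset.sum_nonneg fun j _ => hgnn i j)).mp h i (Finset.mem_univ i)
      have h2 := (Finset.sum_eq_zero_iff_of_nonneg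
        (fun j _ => hgnn i j)).mp h1 j (Finset.mem_univ j)
      have hLpos : 0 < -L i j := by
        rcases lt_or_eq_of_le (hoff i j hne) with h' | h'
        · linarith
        · exact absurd h' hL
      have : F i j = 0 := by
        rcases mul_eq_zero.mp h2 with h' | h'
        · exact absurd h' (ne_of_gt hLpos)
        · exact h'
      exact (hFzero i j).mp this
    · intro h
      apply Finset.sum_eq_zero
      intro i _
      apply Finset.sum_eq_zero
      intro j _
      rcases eq_or_ne i j with rfl | hne
      · rw [(hFzero i i).mpr rfl, mul_zero]
      · rcases eq_or_ne (L i j) 0 with hL | hL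
        · rw [hL, neg_zero, zero_mul]
        · rw [(hFzero i j).mpr (h i j hne hL), mul_zero]
end

section
/- Let Z be a real m×c matrix with nonnegative entries, let 𝓛 be a real c×c matrix whose off-diagonal entries are nonpositive and whose row sums and column sums are all zero, and let x* ∈ ℝ^m be a strictly positive vector. Then for every strictly positive x** ∈ ℝ^m the following are equivalent: (i) Z 𝓛 Exp(Zᵀ Ln(x**/x*)) = 0 (x** is a positive equilibrium); (ii) 𝓛 Exp(Zᵀ Ln(x**/x*)) = 0 (x** is complex-balanced); (iii) setting γ = Zᵀ Ln(x**/x*), one has γ_i = γ_j for every pair i ≠ j with 𝓛_{ij} ≠ 0. In particular, every positive equilibrium is complex-balanced, and the set of all positive equilibria equals { x** ∈ ℝ^m_{>0} : Sᵀ Ln x** = Sᵀ Ln x* } where Sᵀγ collects the differences γ_i − γ_j over the edges of the graph defined by the nonzero off-diagonal entries of 𝓛. -/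
open Matrix

/-- Edge-constancy implies `L v = 0` for `v = Exp γ`, using zero row sums. -/
lemma aux_edge_to_zero {c : ℕ} (L : Matrix (Fin c) (Fin c) ℝ)
    (hrow : ∀ i, ∑ j, L i j = 0) (γ : Fin c → ℝ)
    (hedge : ∀ i j, i ≠ j → L i j ≠ 0 → γ i = γ j) :
    L.mulVec (fun i => Real.exp (γ i)) = 0 := by
  funext i
  have : ∀ j ∈ Finset.univ, L i j * Real.exp (γ j) = L i j * Real.exp (γ i) := by
    intro j _
    by_cases hij : i = j
    · subst hij; rfl
    · by_cases hL : L i j = 0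
      · simp [hL]
      · rw [hedge i j (fun h => hij h) hL]
  simp only [mulVec, dotProduct, Pi.zero_apply]
  rw [Finset.sum_congr rfl this, ← Finset.sum_mul, hrow, zero_mul]

/-- If `γ ⬝ᵥ L (Exp γ) = 0` for a balanced Laplacian, then `γ` is constant on edges. -/
lemma aux_dissipation {c : ℕ} (L : Matrix (Fin c) (Fin c) ℝ)
    (hoff : ∀ i j, i ≠ j → L i j ≤ 0)
    (hrow : ∀ i, ∑ j, L i j = 0)
    (hcol : ∀ j, ∑ i, L i j = 0)
    (γ : Fin c → ℝ)
    (hdot : γ ⬝ᵥ L.mulVec (fun i => Real.exp (γ i)) = 0) :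
    ∀ i j, i ≠ j → L i j ≠ 0 → γ i = γ j := by
  have key : ∀ i j : Fin c,
      (-L i j) * (Real.exp (γ i) - Real.exp (γ j) * (1 + γ i - γ j))
      = γ i * (L i j * Real.exp (γ j)) - L i j * Real.exp (γ i)
        + L i j * Real.exp (γ j) - L i j * (Real.exp (γ j) * γ j) := by
    intro i j; ring
  have h1 : ∑ i : Fin c, ∑ j, L i j * Real.exp (γ i) = 0 := by
    refine Finset.sum_eq_zero fun i _ => ?_
    rw [← Finset.sum_mul, hrow, zero_mul]
  have h2 : ∑ i : Fin c, ∑ j, L i j * Real.exp (γ j) = 0 := by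
    rw [Finset.sum_comm]
    refine Finset.sum_eq_zero fun j _ => ?_
    rw [← Finset.sum_mul, hcol, zero_mul]
  have h3 : ∑ i : Fin c, ∑ j, L i j * (Real.exp (γ j) * γ j) = 0 := by
    rw [Finset.sum_comm]
    refine Finset.sum_eq_zero fun j _ => ?_
    rw [← Finset.sum_mul, hcol, zero_mul]
  have hdot' : ∑ i : Fin c, ∑ j, γ i * (L i j * Real.exp (γ j)) = 0 := by
    simpa [dotProduct, mulVec, Finset.mul_sum] using hdot
  have hSzero : ∑ i : Fin c, ∑ j,
      (-L i j) * (Real.exp (γ i) - Real.exp (γ j) * (1 + γ i - γ j)) = 0 := by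
    simp only [key, Finset.sum_sub_distrib, Finset.sum_add_distrib]
    rw [hdot', h1, h2, h3]
    ring
  have hnonneg : ∀ i ∈ (Finset.univ : Finset (Fin c)), ∀ j ∈ (Finset.univ : Finset (Fin c)),
      0 ≤ (-L i j) * (Real.exp (γ i) - Real.exp (γ j) * (1 + γ i - γ j)) := by
    intro i _ j _
    by_cases hij : i = j
    · subst hij
      have : Real.exp (γ i) - Real.exp (γ i) * (1 + γ i - γ i) = 0 := by ring
      rw [this, mul_zero]
    · have hL : 0 ≤ -L i j := by
        have := hoff i j hij; linarith
      have hb : Real.exp (γ j) * (1 + γ i - γ j) ≤ Real.exp (γ i) := by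
        have h := Real.add_one_le_exp (γ i - γ j)
        calc Real.exp (γ j) * (1 + γ i - γ j)
            = Real.exp (γ j) * ((γ i - γ j) + 1) := by ring
          _ ≤ Real.exp (γ j) * Real.exp (γ i - γ j) := by
              exact mul_le_mul_of_nonneg_left h (Real.exp_pos _).le
          _ = Real.exp (γ i) := by rw [← Real.exp_add]; ring_nf
      exact mul_nonneg hL (by linarith)
  have hterm : ∀ i j : Fin c,
      (-L i j) * (Real.exp (γ i) - Real.exp (γ j) * (1 + γ i - γ j)) = 0 := by
    intro i j
    have hrow0 : ∑ j, (-L i j) * (Real.exp (γ i) - Real.exp (γ j) * (1 + γ i - γ j)) = 0 :=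
      (Finset.sum_eq_zero_iff_of_nonneg
        (fun i hi => Finset.sum_nonneg (fun j hj => hnonneg i hi j hj))).mp hSzero i
        (Finset.mem_univ i)
    exact (Finset.sum_eq_zero_iff_of_nonneg
      (fun j hj => hnonneg i (Finset.mem_univ i) j hj)).mp hrow0 j (Finset.mem_univ j)
  intro i j hij hL
  by_contra hne
  have hLpos : 0 < -L i j := lt_of_le_of_ne (by have := hoff i j hij; linarith)
    (fun h => hL (by linarith))
  have ht : γ i - γ j ≠ 0 := fun h => hne (by linarith [sub_eq_zero.mp h])
  have hstrict : Real.exp (γ j) * (1 + γ i - γ j) < Real.exp (γ i) := by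
    have h := Real.add_one_lt_exp ht
    calc Real.exp (γ j) * (1 + γ i - γ j)
        = Real.exp (γ j) * ((γ i - γ j) + 1) := by ring
      _ < Real.exp (γ j) * Real.exp (γ i - γ j) := by
          exact mul_lt_mul_of_pos_left h (Real.exp_pos _)
      _ = Real.exp (γ i) := by rw [← Real.exp_add]; ring_nf
  have : (-L i j) * (Real.exp (γ i) - Real.exp (γ j) * (1 + γ i - γ j)) > 0 :=
    mul_pos hLpos (by linarith)
  have h0 := hterm i j
  linarith

/-- For a complex-balanced mass action network `ẋ = −Z 𝓛 Exp(Zᵀ Ln(x/x*))` with balanced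
Laplacian `𝓛` and complex-balanced equilibrium `x*`, a positive `x**` is an equilibrium
iff it is complex-balanced, iff `γ = Zᵀ Ln(x**/x*)` is constant on every edge of the graph
of nonzero off-diagonal entries of `𝓛`; moreover the set of positive equilibria is
`{x** > 0 : Sᵀ Ln x** = Sᵀ Ln x*}`, where `Sᵀγ` collects the edge differences `γᵢ − γⱼ`. -/
theorem stmt_1 (m c : ℕ) (Z : Matrix (Fin m) (Fin c) ℝ)
    (hZ : ∀ k i, 0 ≤ Z k i)
    (L : Matrix (Fin c) (Fin c) ℝ)
    (hoff : ∀ i j, i ≠ j → L i j ≤ 0)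
    (hrow : ∀ i, ∑ j, L i j = 0)
    (hcol : ∀ j, ∑ i, L i j = 0)
    (xs : Fin m → ℝ) (hxs : ∀ k, 0 < xs k)
    (x : Fin m → ℝ) (hx : ∀ k, 0 < x k) :
    (Z.mulVec (L.mulVec (fun i =>
        Real.exp (Zᵀ.mulVec (fun k => Real.log (x k / xs k)) i))) = 0
      ↔ L.mulVec (fun i =>
          Real.exp (Zᵀ.mulVec (fun k => Real.log (x k / xs k)) i)) = 0) ∧
    (L.mulVec (fun i =>
        Real.exp (Zᵀ.mulVec (fun k => Real.log (x k / xs k)) i)) = 0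
      ↔ ∀ i j, i ≠ j → L i j ≠ 0 →
          Zᵀ.mulVec (fun k => Real.log (x k / xs k)) i =
          Zᵀ.mulVec (fun k => Real.log (x k / xs k)) j) ∧
    (Z.mulVec (L.mulVec (fun i =>
        Real.exp (Zᵀ.mulVec (fun k => Real.log (x k / xs k)) i))) = 0
      ↔ ∀ i j, i ≠ j → L i j ≠ 0 →
          Zᵀ.mulVec (fun k => Real.log (x k)) i - Zᵀ.mulVec (fun k => Real.log (x k)) j =
          Zᵀ.mulVec (fun k => Real.log (xs k)) i - Zᵀ.mulVec (fun k => Real.log (xs k)) j) := by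
  set w : Fin m → ℝ := fun k => Real.log (x k / xs k) with hw
  set γ : Fin c → ℝ := Zᵀ.mulVec w with hγ
  -- equilibrium → edge condition
  have hZL_edge : Z.mulVec (L.mulVec (fun i => Real.exp (γ i))) = 0 →
      ∀ i j, i ≠ j → L i j ≠ 0 → γ i = γ j := by
    intro h
    apply aux_dissipation L hoff hrow hcol
    have : γ ⬝ᵥ L.mulVec (fun i => Real.exp (γ i))
        = w ⬝ᵥ Z.mulVec (L.mulVec (fun i => Real.exp (γ i))) := by
      rw [Matrix.dotProduct_mulVec w Z, hγ, Matrix.mulVec_transpose]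
    rw [this, h, dotProduct_zero]
  -- edge condition → complex balance
  have hedge_L : (∀ i j, i ≠ j → L i j ≠ 0 → γ i = γ j) →
      L.mulVec (fun i => Real.exp (γ i)) = 0 :=
    aux_edge_to_zero L hrow γ
  have hL_edge : L.mulVec (fun i => Real.exp (γ i)) = 0 →
      ∀ i j, i ≠ j → L i j ≠ 0 → γ i = γ j := by
    intro h
    apply hZL_edge
    rw [h, Matrix.mulVec_zero]
  -- decompose γ
  have hsplit : ∀ i, γ i = Zᵀ.mulVec (fun k => Real.log (x k)) i
      - Zᵀ.mulVec (fun k => Real.log (xs k)) i := by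
    intro i
    simp only [hγ, hw, mulVec, dotProduct]
    rw [← Finset.sum_sub_distrib]
    refine Finset.sum_congr rfl fun k _ => ?_
    rw [Real.log_div (hx k).ne' (hxs k).ne']
    ring
  refine ⟨⟨fun h => hedge_L (hZL_edge h), fun h => by rw [h, Matrix.mulVec_zero]⟩,
    ⟨hL_edge, hedge_L⟩, ?_⟩
  constructor
  · intro h i j hij hL
    have := hZL_edge h i j hij hL
    rw [hsplit i, hsplit j] at this
    linarith
  · intro h
    have hedge : ∀ i j, i ≠ j → L i j ≠ 0 → γ i = γ j := by
      intro i j hij hL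
      have := h i j hij hL
      rw [hsplit i, hsplit j]
      linarith
    rw [hedge_L hedge, Matrix.mulVec_zero]
end

section
/- Let S be a real m×r matrix and x* ∈ ℝ^m a strictly positive vector, and let E = { x ∈ ℝ^m_{>0} : Sᵀ Ln x = Sᵀ Ln x* }. Then the origin 0 ∈ ℝ^m lies in the closure of E if and only if there exists a strictly positive vector μ ∈ ℝ^m with Sᵀμ = 0. -/
open Matrix

/-- The origin lies in the closure of the set of positive equilibria
`E = {x > 0 : Sᵀ Ln x = Sᵀ Ln x*}` iff the network satisfies mass conservation,
i.e. there is a strictly positive `μ` with `Sᵀ μ = 0`. -/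
theorem stmt_2 (m r : ℕ) (S : Matrix (Fin m) (Fin r) ℝ)
    (xs : Fin m → ℝ) (hxs : ∀ k, 0 < xs k) :
    (0 : Fin m → ℝ) ∈ closure {x : Fin m → ℝ | (∀ k, 0 < x k) ∧
        Sᵀ.mulVec (fun k => Real.log (x k)) = Sᵀ.mulVec (fun k => Real.log (xs k))}
      ↔ ∃ μ : Fin m → ℝ, (∀ k, 0 < μ k) ∧ Sᵀ.mulVec μ = 0 := by
  constructor
  · intro h
    rcases Nat.eq_zero_or_pos m with hm | hm
    · subst hm
      exact ⟨fun _ => 1, fun k => k.elim0, by ext j; simp [mulVec, dotProduct]⟩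
    · have : Nonempty (Fin m) := ⟨⟨0, hm⟩⟩
      have hne : (Finset.univ : Finset (Fin m)).Nonempty := Finset.univ_nonempty
      set ε := Finset.univ.inf' hne xs with hε
      have hεpos : 0 < ε := (Finset.lt_inf'_iff hne).mpr fun k _ => hxs k
      obtain ⟨x, hx, hdist⟩ := Metric.mem_closure_iff.mp h ε hεpos
      obtain ⟨hxpos, hxeq⟩ := hx
      have hlt : ∀ k, x k < xs k := by
        intro k
        have h1 : dist ((0 : Fin m → ℝ) k) (x k) ≤ dist (0 : Fin m → ℝ) x :=
          dist_le_pi_dist _ _ k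
        have h2 : |x k| < ε := by
          have := h1.trans_lt hdist
          simpa [Real.dist_eq, abs_sub_comm] using this
        have h3 : ε ≤ xs k := Finset.inf'_le _ (Finset.mem_univ k)
        calc x k ≤ |x k| := le_abs_self _
          _ < ε := h2
          _ ≤ xs k := h3
      refine ⟨fun k => Real.log (xs k) - Real.log (x k), fun k => sub_pos.mpr ?_, ?_⟩
      · exact Real.log_lt_log (hxpos k) (hlt k)
      · have : (fun k => Real.log (xs k) - Real.log (x k)) =
            (fun k => Real.log (xs k)) - (fun k => Real.log (x k)) := rfl
        rw [this, mulVec_sub, hxeq, sub_self]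
  · rintro ⟨μ, hμ, hSμ⟩
    have hmem : ∀ n : ℕ, (fun k => xs k * Real.exp (-(n : ℝ) * μ k)) ∈
        {x : Fin m → ℝ | (∀ k, 0 < x k) ∧
          Sᵀ.mulVec (fun k => Real.log (x k)) = Sᵀ.mulVec (fun k => Real.log (xs k))} := by
      intro n
      refine ⟨fun k => mul_pos (hxs k) (Real.exp_pos _), ?_⟩
      have hlog : (fun k => Real.log (xs k * Real.exp (-(n : ℝ) * μ k))) =
          (fun k => Real.log (xs k)) + (-(n : ℝ)) • μ := by
        funext k
        simp [Real.log_mul (hxs k).ne' (Real.exp_pos _).ne', Real.log_exp]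
      rw [hlog, mulVec_add, mulVec_smul, hSμ, smul_zero, add_zero]
    have htend : Filter.Tendsto (fun n : ℕ => fun k => xs k * Real.exp (-(n : ℝ) * μ k))
        Filter.atTop (nhds (0 : Fin m → ℝ)) := by
      rw [tendsto_pi_nhds]
      intro k
      have h1 : Filter.Tendsto (fun n : ℕ => -(n : ℝ) * μ k) Filter.atTop Filter.atBot := by
        have := (tendsto_natCast_atTop_atTop (R := ℝ)).atTop_mul_const_of_neg
          (neg_neg_iff_pos.mpr (hμ k))
        simpa [mul_comm, neg_mul, mul_neg] using this
      have h2 := Real.tendsto_exp_atBot.comp h1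
      have h3 := h2.const_mul (xs k)
      simpa using h3
    exact mem_closure_of_tendsto htend (Filter.Eventually.of_forall hmem)
end

section
/- Let L be a real c×c matrix (c ≥ 1) all of whose column sums are zero, i.e. 𝟙ᵀL = 0. Then all columns of the adjugate matrix adj(L) are equal; moreover, denoting by ρ ∈ ℝ^c this common column (so adj(L) = ρ 𝟙ᵀ), one has L ρ = 0. -/
open Matrix

/-- Kirchhoff / Matrix Tree construction: if all column sums of the `c × c` real matrix `L`
are zero, then all columns of the adjugate of `L` coincide, i.e. `adj(L) = ρ 𝟙ᵀ` for some
vector `ρ`, and this common column satisfies `L ρ = 0`. -/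
theorem stmt_3 (c : ℕ) (hc : 1 ≤ c) (L : Matrix (Fin c) (Fin c) ℝ)
    (hcol : ∀ j, ∑ i, L i j = 0) :
    ∃ ρ : Fin c → ℝ, (∀ i j, L.adjugate i j = ρ i) ∧ L.mulVec ρ = 0 := by
  have : NeZero c := ⟨by omega⟩
  -- the all-ones vector kills L from the left
  have hone : (fun _ : Fin c => (1:ℝ)) ᵥ* L = 0 := by
    funext j
    simp [vecMul, dotProduct, hcol j]
  have hone_ne : (fun _ : Fin c => (1:ℝ)) ≠ 0 := by
    intro h
    have := congrFun h ⟨0, hc⟩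
    simp at this
  -- determinant is zero
  have hdet : L.det = 0 := by
    rw [← Matrix.exists_vecMul_eq_zero_iff]
    exact ⟨_, hone_ne, hone⟩
  have hadjL : L.adjugate * L = 0 := by
    rw [Matrix.adjugate_mul, hdet, zero_smul]
  have hLadj : L * L.adjugate = 0 := by
    rw [Matrix.mul_adjugate, hdet, zero_smul]
  -- left kernel of L
  set K : Submodule ℝ (Fin c → ℝ) := LinearMap.ker (Lᵀ).mulVecLin with hK
  have memK : ∀ v : Fin c → ℝ, v ∈ K ↔ v ᵥ* L = 0 := by
    intro v
    rw [hK, LinearMap.mem_ker, Matrix.mulVecLin_apply, Matrix.mulVec_transpose]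
  have honeK : (fun _ : Fin c => (1:ℝ)) ∈ K := (memK _).mpr hone
  -- each row of the adjugate lies in K
  have hrowK : ∀ i, (fun j => L.adjugate i j) ∈ K := by
    intro i
    rw [memK]
    funext j
    have := congrFun (congrFun hadjL i) j
    simpa [Matrix.mul_apply, vecMul, dotProduct] using this
  have hconst : ∀ i j j', L.adjugate i j = L.adjugate i j' := by
    by_cases hdim : Module.finrank ℝ K ≤ 1
    · -- K is spanned by the all-ones vector
      have hle : Submodule.span ℝ {(fun _ : Fin c => (1:ℝ))} ≤ K :=
        Submodule.span_le.mpr (Set.singleton_subset_iff.mpr honeK)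
      have hspan : Submodule.span ℝ {(fun _ : Fin c => (1:ℝ))} = K :=
        Submodule.eq_of_le_of_finrank_le hle
          (by rw [finrank_span_singleton hone_ne]; exact hdim)
      intro i j j'
      have hmem := hrowK i
      rw [← hspan, Submodule.mem_span_singleton] at hmem
      obtain ⟨a, ha⟩ := hmem
      have h1 := congrFun ha j
      have h2 := congrFun ha j'
      simp only [Pi.smul_apply, smul_eq_mul, mul_one] at h1 h2
      rw [← h1, ← h2]
    · -- finrank K ≥ 2 : the adjugate vanishes
      push_neg at hdim
      intro i j j'
      have hz : ∀ j₀, L.adjugate i j₀ = 0 := by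
        intro j₀
        rw [Matrix.adjugate_apply]
        rw [← Matrix.exists_vecMul_eq_zero_iff]
        -- find v ∈ K, v ≠ 0, v j₀ = 0
        set f : K →ₗ[ℝ] ℝ := (LinearMap.proj j₀).comp K.subtype with hf
        have hker : LinearMap.ker f ≠ ⊥ := by
          intro hbot
          have hinj := LinearMap.ker_eq_bot.mp hbot
          have h1 := LinearMap.finrank_le_finrank_of_injective hinj
          simp [Module.finrank_self] at h1
          omega
        obtain ⟨x, hxK, hxne⟩ := Submodule.exists_mem_ne_zero_of_ne_bot hker
        refine ⟨(x : Fin c → ℝ), ?_, ?_⟩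
        · simpa using hxne
        · have hxj : (x : Fin c → ℝ) j₀ = 0 := hxK
          have hxL : (x : Fin c → ℝ) ᵥ* L = 0 := (memK _).mp x.2
          funext j₁
          have : ((x : Fin c → ℝ) ᵥ* L) j₁ = 0 := congrFun hxL j₁
          simp only [vecMul, dotProduct, Matrix.updateRow_apply, Pi.zero_apply] at this ⊢
          rw [← this]
          apply Finset.sum_congr rfl
          intro k _
          by_cases hk : k = j₀ <;> simp [hk, hxj]
      simp [hz]
  refine ⟨fun i => L.adjugate i ⟨0, hc⟩, fun i j => hconst i j _, ?_⟩
  funext i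
  have := congrFun (congrFun hLadj i) ⟨0, hc⟩
  simpa [Matrix.mul_apply, Matrix.mulVec, dotProduct] using this
end

section
/- Let L be a real c×c matrix whose off-diagonal entries are nonpositive and all of whose column sums are zero (𝟙ᵀL = 0). Define a directed edge from vertex i to vertex j (for i ≠ j) whenever L_{ji} ≠ 0. Then there exists a strictly positive vector ρ ∈ ℝ^c with L ρ = 0 if and only if every connected component of this directed graph is strongly connected, i.e., for all vertices i, j: if j is reachable from i in the underlying undirected graph, then j is reachable from i along directed edges. -/
open Matrix Relation

lemma forward_dir {c : ℕ} (L : Matrix (Fin c) (Fin c) ℝ)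
    (hoff : ∀ i j, i ≠ j → L i j ≤ 0)
    (hcol : ∀ j, ∑ i, L i j = 0)
    (ρ : Fin c → ℝ) (hρ : ∀ i, 0 < ρ i) (hker : L.mulVec ρ = 0) :
    ∀ i j, ReflTransGen (fun a b => a ≠ b ∧ (L b a ≠ 0 ∨ L a b ≠ 0)) i j →
      ReflTransGen (fun a b => a ≠ b ∧ L b a ≠ 0) i j := by
  classical
  intro i j hij
  set E : Fin c → Fin c → Prop := fun a b => a ≠ b ∧ L b a ≠ 0 with hE
  set S : Finset (Fin c) := Finset.univ.filter (fun k => ReflTransGen E i k) with hS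
  have hSmem : ∀ k, k ∈ S ↔ ReflTransGen E i k := by
    intro k; simp [hS]
  have hclosed : ∀ k, k ∈ S → ∀ m, L m k ≠ 0 → m ∈ S := by
    intro k hk m hm
    by_cases hkm : k = m
    · exact hkm ▸ hk
    · exact (hSmem m).2 (((hSmem k).1 hk).tail ⟨hkm, hm⟩)
  have colS : ∀ m ∈ S, ∑ k ∈ S, L k m = 0 := by
    intro m hm
    have h1 : ∑ k ∈ S, L k m + ∑ k ∈ Sᶜ, L k m = 0 := by
      rw [Finset.sum_add_sum_compl]; exact hcol m
    have h2 : ∑ k ∈ Sᶜ, L k m = 0 := Finset.sum_eq_zero (by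
      intro k hk
      by_contra h
      exact (Finset.mem_compl.1 hk) (hclosed m hm k h))
    linarith
  have key : ∀ k ∈ S, ∀ m ∈ Sᶜ, L k m = 0 := by
    have h0 : ∑ k ∈ S, L.mulVec ρ k = 0 := by simp [hker]
    have h1 : ∑ m, (∑ k ∈ S, L k m) * ρ m = 0 := by
      rw [← h0]
      simp only [Matrix.mulVec, dotProduct, Finset.sum_mul]
      rw [Finset.sum_comm]
    have h2 : ∑ m ∈ S, (∑ k ∈ S, L k m) * ρ m + ∑ m ∈ Sᶜ, (∑ k ∈ S, L k m) * ρ m = 0 := by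
      rw [Finset.sum_add_sum_compl]; exact h1
    have h3 : ∑ m ∈ S, (∑ k ∈ S, L k m) * ρ m = 0 :=
      Finset.sum_eq_zero (fun m hm => by rw [colS m hm, zero_mul])
    have h4 : ∑ m ∈ Sᶜ, (∑ k ∈ S, L k m) * ρ m = 0 := by linarith
    have hnp : ∀ m ∈ Sᶜ, (∑ k ∈ S, L k m) * ρ m ≤ 0 := by
      intro m hm
      have : ∑ k ∈ S, L k m ≤ 0 := Finset.sum_nonpos (fun k hk => by
        refine hoff k m (fun h => ?_)
        exact (Finset.mem_compl.1 hm) (h ▸ hk))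
      exact mul_nonpos_of_nonpos_of_nonneg this (hρ m).le
    have h5 := (Finset.sum_eq_zero_iff_of_nonpos hnp).1 h4
    intro k hk m hm
    have h6 : (∑ k ∈ S, L k m) * ρ m = 0 := h5 m hm
    have h7 : ∑ k ∈ S, L k m = 0 := by
      rcases mul_eq_zero.1 h6 with h | h
      · exact h
      · exact absurd h (hρ m).ne'
    have hnp2 : ∀ k ∈ S, L k m ≤ 0 := fun k hk => hoff k m (fun h => (Finset.mem_compl.1 hm) (h ▸ hk))
    exact (Finset.sum_eq_zero_iff_of_nonpos hnp2).1 h7 k hk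
  have hjS : j ∈ S := by
    induction hij with
    | refl => exact (hSmem i).2 ReflTransGen.refl
    | tail hab e ih =>
      rename_i b b'
      obtain ⟨hne, h | h⟩ := e
      · exact hclosed b ih b' h
      · by_contra hb'
        exact h (key b ih b' (Finset.mem_compl.2 hb'))
  exact (hSmem j).1 hjS

lemma proj_reach {n : ℕ} (E : Fin (n+1) → Fin (n+1) → Prop) (E' : Fin n → Fin n → Prop)
    (hirr : ∀ a, ¬ E a a)
    (h1 : ∀ (a b : Fin (n+1)) (ha : a ≠ Fin.last n) (hb : b ≠ Fin.last n),
        E a b → E' (a.castPred ha) (b.castPred hb))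
    (h2 : ∀ (a b : Fin (n+1)) (ha : a ≠ Fin.last n) (hb : b ≠ Fin.last n),
        a ≠ b → E a (Fin.last n) → E (Fin.last n) b → E' (a.castPred ha) (b.castPred hb)) :
    ∀ (i j : Fin (n+1)) (hi : i ≠ Fin.last n) (hj : j ≠ Fin.last n),
      ReflTransGen E i j → ReflTransGen E' (i.castPred hi) (j.castPred hj) := by
  intro i j hi hj h
  have main : (∀ hx : i ≠ Fin.last n, ReflTransGen E' (i.castPred hx) (j.castPred hj)) ∧
      (i = Fin.last n → ∀ (w : Fin (n+1)) (hw : w ≠ Fin.last n), E w (Fin.last n) →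
        ReflTransGen E' (w.castPred hw) (j.castPred hj)) := Relation.ReflTransGen.head_induction_on
    (motive := fun x (_ : ReflTransGen E x j) =>
      (∀ hx : x ≠ Fin.last n, ReflTransGen E' (x.castPred hx) (j.castPred hj)) ∧
      (x = Fin.last n → ∀ (w : Fin (n+1)) (hw : w ≠ Fin.last n), E w (Fin.last n) →
        ReflTransGen E' (w.castPred hw) (j.castPred hj)))
    h
    (⟨fun _ => ReflTransGen.refl, fun hx => absurd hx hj⟩)
    (by
      intro a y h' hpath IH
      constructor
      · intro ha
        by_cases hy : y = Fin.last n
        · exact IH.2 hy a ha (hy ▸ h')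
        · exact ReflTransGen.head (h1 a y ha hy h') (IH.1 hy)
      · intro hEq w hw hwE
        by_cases hy : y = Fin.last n
        · rw [hEq, hy] at h'
          exact absurd h' (hirr (Fin.last n))
        · by_cases hwy : w = y
          · subst hwy; exact IH.1 hy
          · exact ReflTransGen.head (h2 w y hw hy hwy hwE (hEq ▸ h')) (IH.1 hy))
  exact main.1 hi

lemma backward_dir : ∀ (c : ℕ) (L : Matrix (Fin c) (Fin c) ℝ),
    (∀ i j, i ≠ j → L i j ≤ 0) →
    (∀ j, ∑ i, L i j = 0) →
    (∀ i j, ReflTransGen (fun a b => a ≠ b ∧ (L b a ≠ 0 ∨ L a b ≠ 0)) i j →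
      ReflTransGen (fun a b => a ≠ b ∧ L b a ≠ 0) i j) →
    ∃ ρ : Fin c → ℝ, (∀ i, 0 < ρ i) ∧ L.mulVec ρ = 0 := by
  intro c
  induction c with
  | zero =>
    intro L _ _ _
    exact ⟨fun _ => 1, fun i => i.elim0, funext fun i => i.elim0⟩
  | succ n ih =>
    intro L hoff hcol hyp
    set lst : Fin (n+1) := Fin.last n with hlst
    set d : ℝ := L lst lst with hd
    have hcsne : ∀ i : Fin n, i.castSucc ≠ lst := fun i => (Fin.castSucc_lt_last i).ne
    have hd_eq : d = ∑ i : Fin n, -(L i.castSucc lst) := by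
      have h := hcol lst
      rw [Fin.sum_univ_castSucc] at h
      rw [Finset.sum_neg_distrib]
      linarith
    have hd_nonneg : 0 ≤ d := by
      rw [hd_eq]
      exact Finset.sum_nonneg fun i _ => neg_nonneg.2 (hoff _ _ (hcsne i))
    have houtlast : d = 0 → ∀ i : Fin n, L i.castSucc lst = 0 := by
      intro h0 i
      have hall := (Finset.sum_eq_zero_iff_of_nonneg
        (fun i (_ : i ∈ Finset.univ) => neg_nonneg.2 (hoff _ _ (hcsne i)))).1
        (by rw [← hd_eq]; exact h0)
      have := hall i (Finset.mem_univ i)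
      linarith
    have hrowlast : d = 0 → ∀ i : Fin n, L lst i.castSucc = 0 := by
      intro h0 i
      by_contra hne
      have hu : ReflTransGen (fun a b => a ≠ b ∧ (L b a ≠ 0 ∨ L a b ≠ 0)) lst i.castSucc :=
        ReflTransGen.single ⟨Ne.symm (hcsne i), Or.inr hne⟩
      rcases (hyp lst i.castSucc hu).cases_head with h | ⟨z, ⟨hz1, hz2⟩, _⟩
      · exact hcsne i h.symm
      · have hz : z ≠ lst := Ne.symm hz1
        have hzz := houtlast h0 (z.castPred hz)
        rw [Fin.castSucc_castPred] at hzz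
        exact hz2 hzz
    set L' : Matrix (Fin n) (Fin n) ℝ :=
      fun i j => L i.castSucc j.castSucc - L i.castSucc lst * L lst j.castSucc / d with hL'
    have htn : ∀ i j : Fin n, 0 ≤ L i.castSucc lst * L lst j.castSucc / d := by
      intro i j
      apply div_nonneg _ hd_nonneg
      rw [← neg_mul_neg]
      exact mul_nonneg (neg_nonneg.2 (hoff _ _ (hcsne i))) (neg_nonneg.2 (hoff _ _ (Ne.symm (hcsne j))))
    have hoff' : ∀ i j : Fin n, i ≠ j → L' i j ≤ 0 := by
      intro i j hij
      have h1 : L i.castSucc j.castSucc ≤ 0 := hoff _ _ fun h => hij (Fin.castSucc_injective n h)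
      have h2 := htn i j
      simp only [hL']
      linarith
    have hdpos_of : ∀ i : Fin n, L i.castSucc lst ≠ 0 → 0 < d := by
      intro i hi
      have h1 : -(L i.castSucc lst) ≤ ∑ k : Fin n, -(L k.castSucc lst) :=
        Finset.single_le_sum (fun k _ => neg_nonneg.2 (hoff _ _ (hcsne k))) (Finset.mem_univ i)
      have h2 : 0 < -(L i.castSucc lst) := neg_pos.2 (lt_of_le_of_ne (hoff _ _ (hcsne i)) hi)
      rw [hd_eq]; linarith
    have hcharb1 : ∀ i j : Fin n, i ≠ j → L i.castSucc j.castSucc ≠ 0 → L' i j < 0 := by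
      intro i j hne hij
      have h1 : L i.castSucc j.castSucc < 0 :=
        lt_of_le_of_ne (hoff _ _ fun h => hne (Fin.castSucc_injective n h)) hij
      have h2 := htn i j
      simp only [hL']
      linarith
    have hcharb2 : ∀ i j : Fin n, i ≠ j → L i.castSucc lst ≠ 0 → L lst j.castSucc ≠ 0 → L' i j < 0 := by
      intro i j hij h1 h2
      have hdp : 0 < d := hdpos_of i h1
      have h1' : L i.castSucc lst < 0 := lt_of_le_of_ne (hoff _ _ (hcsne i)) h1
      have h2' : L lst j.castSucc < 0 := lt_of_le_of_ne (hoff _ _ (Ne.symm (hcsne j))) h2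
      have hprod : 0 < L i.castSucc lst * L lst j.castSucc / d :=
        div_pos (mul_pos_of_neg_of_neg h1' h2') hdp
      have h3 : L i.castSucc j.castSucc ≤ 0 := hoff _ _ fun h => hij (Fin.castSucc_injective n h)
      simp only [hL']
      linarith
    have hcharf : ∀ i j : Fin n, L' i j ≠ 0 →
        L i.castSucc j.castSucc ≠ 0 ∨ (L i.castSucc lst ≠ 0 ∧ L lst j.castSucc ≠ 0) := by
      intro i j h
      by_contra hcon
      push_neg at hcon
      obtain ⟨ha, hb⟩ := hcon
      apply h
      have hz : L i.castSucc lst * L lst j.castSucc = 0 := by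
        by_cases h1 : L i.castSucc lst = 0
        · rw [h1, zero_mul]
        · rw [hb h1, mul_zero]
      simp only [hL', ha, hz, zero_div, sub_zero]
    have hsum1 : ∀ j : Fin n, ∑ i : Fin n, L i.castSucc j.castSucc = -(L lst j.castSucc) := by
      intro j
      have h := hcol j.castSucc
      rw [Fin.sum_univ_castSucc] at h
      linarith
    have hsum2 : ∑ i : Fin n, L i.castSucc lst = -d := by
      have h := hcol lst
      rw [Fin.sum_univ_castSucc] at h
      linarith
    have hcol' : ∀ j : Fin n, ∑ i, L' i j = 0 := by
      intro j
      simp only [hL']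
      rw [Finset.sum_sub_distrib]
      have e1 : ∑ i : Fin n, L i.castSucc lst * L lst j.castSucc / d
          = (∑ i : Fin n, L i.castSucc lst) * (L lst j.castSucc / d) := by
        rw [Finset.sum_mul]
        exact Finset.sum_congr rfl fun i _ => by rw [mul_div_assoc]
      rw [hsum1 j, e1, hsum2]
      by_cases h0 : d = 0
      · rw [hrowlast h0 j]
        simp
      · field_simp
        ring
    -- lifting undirected L' edges to undirected L reachability
    set U : Fin (n+1) → Fin (n+1) → Prop := fun a b => a ≠ b ∧ (L b a ≠ 0 ∨ L a b ≠ 0) with hU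
    have hulift : ∀ x y : Fin n, x ≠ y → L' y x ≠ 0 → ReflTransGen U x.castSucc y.castSucc := by
      intro x y hxy h
      rcases hcharf y x h with h1 | ⟨h1, h2⟩
      · exact ReflTransGen.single ⟨fun he => hxy (Fin.castSucc_injective n he), Or.inl h1⟩
      · refine ReflTransGen.head ⟨hcsne x, Or.inl h2⟩ (ReflTransGen.single ⟨Ne.symm (hcsne y), Or.inl h1⟩)
    have hulift' : ∀ x y : Fin n, x ≠ y → L' x y ≠ 0 → ReflTransGen U x.castSucc y.castSucc := by
      intro x y hxy h
      rcases hcharf x y h with h1 | ⟨h1, h2⟩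
      · exact ReflTransGen.single ⟨fun he => hxy (Fin.castSucc_injective n he), Or.inr h1⟩
      · refine ReflTransGen.head ⟨hcsne x, Or.inr h1⟩ (ReflTransGen.single ⟨Ne.symm (hcsne y), Or.inr h2⟩)
    have hstep1 : ∀ i j : Fin n,
        ReflTransGen (fun a b => a ≠ b ∧ (L' b a ≠ 0 ∨ L' a b ≠ 0)) i j →
        ReflTransGen U i.castSucc j.castSucc := by
      intro i j h
      induction h with
      | refl => exact ReflTransGen.refl
      | tail hab e ih =>
        obtain ⟨hne, h1 | h1⟩ := e
        · exact ih.trans (hulift _ _ hne h1)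
        · exact ih.trans (hulift' _ _ hne h1)
    have hpredne : ∀ (a b : Fin (n+1)) (ha : a ≠ lst) (hb : b ≠ lst), a ≠ b →
        a.castPred ha ≠ b.castPred hb := by
      intro a b ha hb hab h
      apply hab
      rw [← Fin.castSucc_castPred a ha, ← Fin.castSucc_castPred b hb, h]
    have hp1 : ∀ (a b : Fin (n+1)) (ha : a ≠ lst) (hb : b ≠ lst),
        (a ≠ b ∧ L b a ≠ 0) →
        ((a.castPred ha) ≠ (b.castPred hb) ∧ L' (b.castPred hb) (a.castPred ha) ≠ 0) := by
      intro a b ha hb ⟨hab, hL⟩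
      refine ⟨hpredne a b ha hb hab, ?_⟩
      have := hcharb1 (b.castPred hb) (a.castPred ha) (hpredne b a hb ha (Ne.symm hab)) ?_
      · exact this.ne
      · rw [Fin.castSucc_castPred, Fin.castSucc_castPred]; exact hL
    have hp2 : ∀ (a b : Fin (n+1)) (ha : a ≠ lst) (hb : b ≠ lst), a ≠ b →
        (a ≠ lst ∧ L lst a ≠ 0) → (lst ≠ b ∧ L b lst ≠ 0) →
        ((a.castPred ha) ≠ (b.castPred hb) ∧ L' (b.castPred hb) (a.castPred ha) ≠ 0) := by
      intro a b ha hb hab ⟨_, hLa⟩ ⟨_, hLb⟩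
      refine ⟨hpredne a b ha hb hab, ?_⟩
      have := hcharb2 (b.castPred hb) (a.castPred ha) (hpredne b a hb ha (Ne.symm hab)) ?_ ?_
      · exact this.ne
      · rw [Fin.castSucc_castPred]; exact hLb
      · rw [Fin.castSucc_castPred]; exact hLa
    have hyp' : ∀ i j : Fin n,
        ReflTransGen (fun a b => a ≠ b ∧ (L' b a ≠ 0 ∨ L' a b ≠ 0)) i j →
        ReflTransGen (fun a b => a ≠ b ∧ L' b a ≠ 0) i j := by
      intro i j h
      have hdir := hyp _ _ (hstep1 i j h)
      have hproj := proj_reach (fun a b => a ≠ b ∧ L b a ≠ 0) (fun a b => a ≠ b ∧ L' b a ≠ 0)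
        (fun a h => h.1 rfl) hp1 hp2 i.castSucc j.castSucc (hcsne i) (hcsne j) hdir
      simpa [Fin.castPred_castSucc] using hproj
    obtain ⟨ρ', hρ', hker'⟩ := ih L' hoff' hcol' hyp'
    have hin : d ≠ 0 → ∃ w : Fin n, L lst w.castSucc ≠ 0 := by
      intro h0
      have hex : ∃ k : Fin n, L k.castSucc lst ≠ 0 := by
        by_contra hc
        push_neg at hc
        apply h0
        rw [hd_eq]
        exact Finset.sum_eq_zero fun i _ => by rw [hc i, neg_zero]
      obtain ⟨k, hk⟩ := hex
      have hu : ReflTransGen U k.castSucc lst := ReflTransGen.single ⟨hcsne k, Or.inr hk⟩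
      rcases (hyp _ _ hu).cases_tail with h | ⟨z, _, hz1, hz2⟩
      · exact absurd h.symm (hcsne k)
      · exact ⟨z.castPred hz1, by rwa [Fin.castSucc_castPred]⟩
    set ρl : ℝ := if d = 0 then 1 else (∑ j : Fin n, -(L lst j.castSucc) * ρ' j) / d with hρl
    have hρlpos : 0 < ρl := by
      rw [hρl]
      split_ifs with h0
      · exact one_pos
      · apply div_pos _ (lt_of_le_of_ne hd_nonneg (Ne.symm h0))
        obtain ⟨w, hw⟩ := hin h0
        refine Finset.sum_pos'
          (fun j _ => mul_nonneg (neg_nonneg.2 (hoff _ _ (Ne.symm (hcsne j)))) (hρ' j).le)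
          ⟨w, Finset.mem_univ w, ?_⟩
        exact mul_pos (neg_pos.2 (lt_of_le_of_ne (hoff _ _ (Ne.symm (hcsne w))) hw)) (hρ' w)
    have hkey : d * ρl = ∑ j : Fin n, -(L lst j.castSucc) * ρ' j := by
      rw [hρl]
      split_ifs with h0
      · rw [h0, zero_mul]
        symm
        exact Finset.sum_eq_zero fun j _ => by rw [hrowlast h0 j, neg_zero, zero_mul]
      · field_simp
    have hsum3 : ∑ j : Fin n, L lst j.castSucc * ρ' j = -(d * ρl) := by
      rw [hkey]
      rw [← Finset.sum_neg_distrib]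
      exact Finset.sum_congr rfl fun j _ => by ring
    set ρ : Fin (n+1) → ℝ := Fin.snoc ρ' ρl with hρdef
    have hmv : ∀ i : Fin (n+1), L.mulVec ρ i = ∑ j : Fin n, L i j.castSucc * ρ' j + L i lst * ρl := by
      intro i
      simp only [Matrix.mulVec, dotProduct]
      rw [Fin.sum_univ_castSucc]
      simp [hρdef]
      exact Or.inl rfl
    refine ⟨ρ, ?_, ?_⟩
    · intro i
      refine Fin.lastCases ?_ ?_ i
      · simpa [hρdef] using hρlpos
      · intro k; simpa [hρdef] using hρ' k
    · funext i
      rw [Pi.zero_apply, hmv]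
      refine Fin.lastCases ?_ ?_ i
      · rw [hsum3]
        have : L lst lst = d := hd.symm
        rw [this]
        ring
      · intro k
        have hk0 : ∑ j : Fin n, L' k j * ρ' j = 0 := by
          simpa [Matrix.mulVec, dotProduct] using congrFun hker' k
        by_cases h0 : d = 0
        · have hz := houtlast h0 k
          rw [hz, zero_mul, add_zero, ← hk0]
          refine Finset.sum_congr rfl fun j _ => ?_
          simp [hL', hz]
        · have expand : ∑ j : Fin n, L k.castSucc j.castSucc * ρ' j
              = ∑ j : Fin n, L' k j * ρ' j
                + (L k.castSucc lst / d) * ∑ j : Fin n, L lst j.castSucc * ρ' j := by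
            rw [Finset.mul_sum, ← Finset.sum_add_distrib]
            refine Finset.sum_congr rfl fun j _ => ?_
            simp only [hL']
            field_simp
            ring
          rw [expand, hk0, hsum3, zero_add]
          field_simp
          ring

/-- A real `c × c` matrix `L` with nonpositive off-diagonal entries and zero column sums
(out-degree Laplacian, with a directed edge `i → j` whenever `L j i ≠ 0`, `i ≠ j`) has a
strictly positive kernel vector iff every connected component of the directed graph is
strongly connected: whenever `j` is reachable from `i` in the underlying undirected graph,
`j` is reachable from `i` along directed edges. -/
theorem stmt_4 (c : ℕ) (L : Matrix (Fin c) (Fin c) ℝ)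
    (hoff : ∀ i j, i ≠ j → L i j ≤ 0)
    (hcol : ∀ j, ∑ i, L i j = 0) :
    (∃ ρ : Fin c → ℝ, (∀ i, 0 < ρ i) ∧ L.mulVec ρ = 0) ↔
    (∀ i j : Fin c,
      Relation.ReflTransGen (fun a b => a ≠ b ∧ (L b a ≠ 0 ∨ L a b ≠ 0)) i j →
      Relation.ReflTransGen (fun a b => a ≠ b ∧ L b a ≠ 0) i j) := by
  constructor
  · rintro ⟨ρ, hρ, hker⟩
    exact forward_dir L hoff hcol ρ hρ hker
  · intro hyp
    exact backward_dir c L hoff hcol hyp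
end

section
/- Let L be a real c×c matrix, let Z be a real m×c matrix, and suppose ρ ∈ ℝ^c is a strictly positive vector such that L ρ = 0 and the kernel of L equals the span of ρ. Then there exists a strictly positive vector x* ∈ ℝ^m with L Exp(Zᵀ Ln x*) = 0 if and only if Ln ρ belongs to the subspace im(Zᵀ) + span{𝟙_c}. -/
open Matrix

/-- (Theorem 2 for a connected graph of complexes.) Let `ρ > 0` span the kernel of the
Laplacian `L` with `Lρ = 0`. Then a complex-balanced equilibrium `x* > 0` with
`L Exp(Zᵀ Ln x*) = 0` exists iff `Ln ρ ∈ im Zᵀ + span{𝟙}`. -/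
theorem stmt_6 (m c : ℕ) (L : Matrix (Fin c) (Fin c) ℝ) (Z : Matrix (Fin m) (Fin c) ℝ)
    (ρ : Fin c → ℝ) (hρ : ∀ i, 0 < ρ i) (hLρ : L.mulVec ρ = 0)
    (hker : LinearMap.ker L.mulVecLin = Submodule.span ℝ {ρ}) :
    (∃ xs : Fin m → ℝ, (∀ k, 0 < xs k) ∧
        L.mulVec (fun i => Real.exp (Zᵀ.mulVec (fun k => Real.log (xs k)) i)) = 0) ↔
    (fun i => Real.log (ρ i)) ∈
      LinearMap.range Zᵀ.mulVecLin ⊔ Submodule.span ℝ {(fun _ => 1 : Fin c → ℝ)} := by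
  constructor
  · rintro ⟨xs, hxs, hbal⟩
    rcases Nat.eq_zero_or_pos c with hc | hc
    · subst hc
      have : (fun i : Fin 0 => Real.log (ρ i)) = 0 := funext fun i => i.elim0
      rw [this]; exact Submodule.zero_mem _
    set w : Fin c → ℝ := fun i => Real.exp (Zᵀ.mulVec (fun k => Real.log (xs k)) i) with hw
    have hwker : w ∈ LinearMap.ker L.mulVecLin := by
      simpa [Matrix.mulVecLin_apply] using hbal
    rw [hker, Submodule.mem_span_singleton] at hwker
    obtain ⟨t, ht⟩ := hwker
    have hwpos : ∀ i, 0 < w i := fun i => Real.exp_pos _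
    have htpos : 0 < t := by
      have i0 : Fin c := ⟨0, hc⟩
      have h1 : 0 < t * ρ i0 := by
        have := hwpos i0
        rw [← ht] at this
        simpa using this
      nlinarith [hρ i0]
    have key : ∀ i, Real.log (ρ i) =
        Zᵀ.mulVec (fun k => Real.log (xs k)) i + (-Real.log t) * 1 := by
      intro i
      have hwi : w i = t * ρ i := by rw [← ht]; simp
      have := congrArg Real.log hwi
      rw [hw, Real.log_exp, Real.log_mul (ne_of_gt htpos) (ne_of_gt (hρ i))] at this
      linarith
    apply Submodule.mem_sup.mpr
    refine ⟨Zᵀ.mulVec (fun k => Real.log (xs k)), ⟨_, rfl⟩,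
      (-Real.log t) • (fun _ => 1 : Fin c → ℝ), ?_, ?_⟩
    · exact Submodule.smul_mem _ _ (Submodule.mem_span_singleton_self _)
    · funext i
      simpa using (key i).symm
  · intro h
    obtain ⟨y, ⟨v, hv⟩, z, hz, hyz⟩ := Submodule.mem_sup.mp h
    obtain ⟨s, hs⟩ := Submodule.mem_span_singleton.mp hz
    refine ⟨fun k => Real.exp (v k), fun k => Real.exp_pos _, ?_⟩
    have hlog : (fun k => Real.log (Real.exp (v k))) = v := funext fun k => Real.log_exp _
    rw [hlog]
    have hZv : ∀ i, Zᵀ.mulVec v i = Real.log (ρ i) - s := by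
      intro i
      have := congrFun hyz i
      rw [← hv, ← hs] at this
      have h2 : Zᵀ.mulVec v i + s = Real.log (ρ i) := by
        simpa [Matrix.mulVecLin_apply, Matrix.vecMul_transpose, Matrix.mulVec_transpose] using this
      linarith
    have : (fun i => Real.exp (Zᵀ.mulVec v i)) = Real.exp (-s) • ρ := by
      funext i
      rw [hZv i]
      simp [Real.exp_sub, smul_eq_mul, Real.exp_log (hρ i), Real.exp_neg]
      ring
    rw [this, Matrix.mulVec_smul, hLρ, smul_zero]
end

section
/- Let 𝓛_e be a real (c+1)×(c+1) matrix whose off-diagonal entries are nonpositive and whose row sums and column sums are all zero. For γ ∈ ℝ^c let γ_e = (γ, 0) ∈ ℝ^{c+1} be γ extended by a zero last component. Then γ_eᵀ 𝓛_e Exp(γ_e) ≥ 0, and equality holds if and only if (a) γ_i = γ_j for all 1 ≤ i, j ≤ c with i ≠ j and (𝓛_e)_{ij} ≠ 0, and (b) γ_i = 0 for every 1 ≤ i ≤ c such that (𝓛_e)_{i,c+1} ≠ 0 or (𝓛_e)_{c+1,i} ≠ 0. -/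
open Matrix

private noncomputable def phiAux (x y : ℝ) : ℝ := Real.exp y * (y - x) - Real.exp y + Real.exp x

private lemma phiAux_nonneg (x y : ℝ) : 0 ≤ phiAux x y := by
  have h := Real.add_one_le_exp (x - y)
  have hx : Real.exp x = Real.exp y * Real.exp (x - y) := by
    rw [← Real.exp_add]; ring_nf
  have hy := Real.exp_pos y
  unfold phiAux
  nlinarith

private lemma phiAux_eq_zero_iff (x y : ℝ) : phiAux x y = 0 ↔ x = y := by
  constructor
  · intro h
    by_contra hne
    have h2 := Real.add_one_lt_exp (x := x - y) (by intro h'; exact hne (by linarith))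
    have hx : Real.exp x = Real.exp y * Real.exp (x - y) := by
      rw [← Real.exp_add]; ring_nf
    have hy := Real.exp_pos y
    unfold phiAux at h
    nlinarith
  · intro h; subst h; unfold phiAux; ring

/-- (Theorem 3.) For a balanced Laplacian `𝓛_e` of the extended graph of complexes and
`γ_e = (γ, 0)`, one has `γ_eᵀ 𝓛_e Exp(γ_e) ≥ 0`, with equality iff `γ` is constant on every
edge among the first `c` vertices and vanishes on every vertex linked to the zero complex. -/
theorem stmt_9 (c : ℕ) (Le : Matrix (Fin (c + 1)) (Fin (c + 1)) ℝ)
    (hoff : ∀ i j, i ≠ j → Le i j ≤ 0)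
    (hrow : ∀ i, ∑ j, Le i j = 0)
    (hcol : ∀ j, ∑ i, Le i j = 0)
    (γ : Fin c → ℝ) :
    0 ≤ (Fin.snoc γ 0 : Fin (c + 1) → ℝ) ⬝ᵥ
        Le.mulVec (fun i => Real.exp ((Fin.snoc γ 0 : Fin (c + 1) → ℝ) i)) ∧
    ((Fin.snoc γ 0 : Fin (c + 1) → ℝ) ⬝ᵥ
        Le.mulVec (fun i => Real.exp ((Fin.snoc γ 0 : Fin (c + 1) → ℝ) i)) = 0 ↔
      ((∀ i j : Fin c, i ≠ j → Le i.castSucc j.castSucc ≠ 0 → γ i = γ j) ∧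
       (∀ i : Fin c,
          (Le i.castSucc (Fin.last c) ≠ 0 ∨ Le (Fin.last c) i.castSucc ≠ 0) → γ i = 0))) := by
  set g : Fin (c + 1) → ℝ := Fin.snoc γ 0 with hg
  set F : Fin (c + 1) → Fin (c + 1) → ℝ := fun i j => (-Le i j) * phiAux (g i) (g j) with hF
  -- the scalar quantity
  have hS : g ⬝ᵥ Le.mulVec (fun i => Real.exp (g i))
      = ∑ i, ∑ j, g i * (Le i j * Real.exp (g j)) := by
    simp only [dotProduct, mulVec, dotProduct]
    exact Finset.sum_congr rfl fun i _ => by rw [Finset.mul_sum]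
  -- key identity
  have key : g ⬝ᵥ Le.mulVec (fun i => Real.exp (g i)) = ∑ i, ∑ j, F i j := by
    rw [hS]
    have expand : ∀ i j : Fin (c+1), F i j =
        g i * (Le i j * Real.exp (g j)) - Le i j * (g j * Real.exp (g j))
          + Le i j * Real.exp (g j) - Le i j * Real.exp (g i) := by
      intro i j; simp only [hF, phiAux]; ring
    have h1 : ∑ i, ∑ j, Le i j * (g j * Real.exp (g j)) = 0 := by
      rw [Finset.sum_comm]
      refine Finset.sum_eq_zero fun j _ => ?_
      rw [← Finset.sum_mul, hcol j, zero_mul]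
    have h2 : ∑ i, ∑ j, Le i j * Real.exp (g j) = 0 := by
      rw [Finset.sum_comm]
      refine Finset.sum_eq_zero fun j _ => ?_
      rw [← Finset.sum_mul, hcol j, zero_mul]
    have h3 : ∑ i, ∑ j, Le i j * Real.exp (g i) = 0 := by
      refine Finset.sum_eq_zero fun i _ => ?_
      rw [← Finset.sum_mul, hrow i, zero_mul]
    have : ∑ i, ∑ j, F i j =
        (∑ i, ∑ j, g i * (Le i j * Real.exp (g j)))
          - (∑ i, ∑ j, Le i j * (g j * Real.exp (g j)))
          + (∑ i, ∑ j, Le i j * Real.exp (g j))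
          - (∑ i, ∑ j, Le i j * Real.exp (g i)) := by
      rw [← Finset.sum_sub_distrib, ← Finset.sum_add_distrib, ← Finset.sum_sub_distrib]
      refine Finset.sum_congr rfl fun i _ => ?_
      rw [← Finset.sum_sub_distrib, ← Finset.sum_add_distrib, ← Finset.sum_sub_distrib]
      exact Finset.sum_congr rfl fun j _ => expand i j
    rw [this, h1, h2, h3]; ring
  -- nonnegativity of each term
  have hFnonneg : ∀ i j : Fin (c+1), 0 ≤ F i j := by
    intro i j
    rcases eq_or_ne i j with rfl | hne
    · have : phiAux (g i) (g i) = 0 := (phiAux_eq_zero_iff _ _).2 rfl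
      simp [hF, this]
    · exact mul_nonneg (by linarith [hoff i j hne]) (phiAux_nonneg _ _)
  have hnonneg : 0 ≤ g ⬝ᵥ Le.mulVec (fun i => Real.exp (g i)) := by
    rw [key]
    exact Finset.sum_nonneg fun i _ => Finset.sum_nonneg fun j _ => hFnonneg i j
  refine ⟨hnonneg, ?_⟩
  have hzero_iff : g ⬝ᵥ Le.mulVec (fun i => Real.exp (g i)) = 0 ↔
      ∀ i j : Fin (c+1), F i j = 0 := by
    rw [key]
    rw [Finset.sum_eq_zero_iff_of_nonneg
      (fun i _ => Finset.sum_nonneg fun j _ => hFnonneg i j)]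
    constructor
    · intro h i j
      have := h i (Finset.mem_univ i)
      rw [Finset.sum_eq_zero_iff_of_nonneg (fun j _ => hFnonneg i j)] at this
      exact this j (Finset.mem_univ j)
    · intro h i _
      exact Finset.sum_eq_zero fun j _ => h i j
  rw [hzero_iff]
  have hglast : g (Fin.last c) = 0 := by simp [hg]
  have hgcs : ∀ i : Fin c, g i.castSucc = γ i := fun i => by simp [hg]
  constructor
  · intro h
    constructor
    · intro i j hij hLe
      have hF0 := h i.castSucc j.castSucc
      rw [hF] at hF0
      rcases mul_eq_zero.1 hF0 with h' | h'
      · exact absurd (by linarith : Le i.castSucc j.castSucc = 0) hLe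
      · have := (phiAux_eq_zero_iff _ _).1 h'
        rwa [hgcs, hgcs] at this
    · intro i hi
      rcases hi with hLe | hLe
      · have hF0 := h i.castSucc (Fin.last c)
        rw [hF] at hF0
        rcases mul_eq_zero.1 hF0 with h' | h'
        · exact absurd (by linarith : Le i.castSucc (Fin.last c) = 0) hLe
        · have := (phiAux_eq_zero_iff _ _).1 h'
          rwa [hgcs, hglast] at this
      · have hF0 := h (Fin.last c) i.castSucc
        rw [hF] at hF0
        rcases mul_eq_zero.1 hF0 with h' | h'
        · exact absurd (by linarith : Le (Fin.last c) i.castSucc = 0) hLe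
        · have := (phiAux_eq_zero_iff _ _).1 h'
          rw [hgcs, hglast] at this
          exact this.symm
  · rintro ⟨ha, hb⟩ i j
    have hphi : g i = g j → F i j = 0 := by
      intro hgg
      rw [hF]
      simp only
      rw [(phiAux_eq_zero_iff _ _).2 hgg, mul_zero]
    have hLe0 : Le i j = 0 → F i j = 0 := by
      intro h0; rw [hF]; simp [h0]
    rcases eq_or_ne i j with rfl | hne
    · exact hphi rfl
    rcases eq_or_ne (Le i j) 0 with h0 | h0
    · exact hLe0 h0
    refine hphi ?_
    induction i using Fin.lastCases with
    | last =>
      induction j using Fin.lastCases with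
      | last => rfl
      | cast j' =>
        rw [hglast, hgcs]
        exact (hb j' (Or.inr h0)).symm
    | cast i' =>
      induction j using Fin.lastCases with
      | last =>
        rw [hglast, hgcs]
        exact hb i' (Or.inl h0)
      | cast j' =>
        rw [hgcs, hgcs]
        exact ha i' j' (fun h => hne (by rw [h])) h0
end

section
/- In the setting of the previous statement (Z m×c nonnegative, Z_e = [Z 0], 𝓛_e a (c+1)×(c+1) matrix with nonpositive off-diagonal entries and zero row and column sums, x* > 0), assume additionally that the extended graph of complexes is connected, i.e. the graph on vertices {1,…,c+1} with an undirected edge between distinct i and j whenever (𝓛_e)_{ij} ≠ 0 or (𝓛_e)_{ji} ≠ 0 is connected. Then a strictly positive x** is a steady state (Z_e 𝓛_e Exp(Z_eᵀ Ln(x**/x*)) = 0) if and only if Zᵀ Ln x** = Zᵀ Ln x*. If moreover the linear map defined by Z (from ℝ^c to ℝ^m) is surjective, then x* is the unique positive steady state. -/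
open Matrix

lemma psi_nonneg (s t : ℝ) : 0 ≤ Real.exp t * (t - s) - Real.exp t + Real.exp s := by
  have h := Real.add_one_le_exp (s - t)
  have he : Real.exp s = Real.exp t * Real.exp (s - t) := by
    rw [← Real.exp_add]; ring_nf
  nlinarith [Real.exp_pos t]

lemma psi_eq_zero {s t : ℝ} (h : Real.exp t * (t - s) - Real.exp t + Real.exp s = 0) :
    s = t := by
  by_contra hne
  have h2 := Real.add_one_lt_exp (show s - t ≠ 0 by intro h'; exact hne (by linarith))
  have he : Real.exp s = Real.exp t * Real.exp (s - t) := by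
    rw [← Real.exp_add]; ring_nf
  nlinarith [Real.exp_pos t]

/-- Key Laplacian lemma: if the weighted "dissipation" sum vanishes, then `w` is constant
along edges of the graph. -/
lemma laplacian_key {n : ℕ} (Le : Matrix (Fin n) (Fin n) ℝ)
    (hoff : ∀ i j, i ≠ j → Le i j ≤ 0)
    (hrow : ∀ i, ∑ j, Le i j = 0) (hcol : ∀ j, ∑ i, Le i j = 0)
    (w : Fin n → ℝ)
    (hS : ∑ i, w i * (Le.mulVec fun j => Real.exp (w j)) i = 0) :
    ∀ i j, Le i j ≠ 0 → w i = w j := by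
  set f : Fin n → Fin n → ℝ := fun i j =>
    -Le i j * (Real.exp (w j) * (w j - w i) - Real.exp (w j) + Real.exp (w i)) with hf
  have hfnn : ∀ i j, 0 ≤ f i j := by
    intro i j
    rcases eq_or_ne i j with rfl | hij
    · simp [hf]
    · exact mul_nonneg (by linarith [hoff i j hij]) (psi_nonneg _ _)
  have hsum : ∑ i, ∑ j, f i j = 0 := by
    have hexp : ∀ i j : Fin n, f i j =
        w i * (Le i j * Real.exp (w j)) - Le i j * (Real.exp (w j) * w j)
          + (Le i j * Real.exp (w j) - Le i j * Real.exp (w i)) := by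
      intro i j; simp only [hf]; ring
    calc ∑ i, ∑ j, f i j
        = (∑ i, ∑ j, w i * (Le i j * Real.exp (w j)))
          - (∑ i, ∑ j, Le i j * (Real.exp (w j) * w j))
          + ((∑ i, ∑ j, Le i j * Real.exp (w j))
            - (∑ i, ∑ j, Le i j * Real.exp (w i))) := by
          simp only [hexp, Finset.sum_sub_distrib, Finset.sum_add_distrib]
      _ = 0 := by
          have h1 : (∑ i, ∑ j, w i * (Le i j * Real.exp (w j)))
              = ∑ i, w i * (Le.mulVec fun j => Real.exp (w j)) i := by
            refine Finset.sum_congr rfl fun i _ => ?_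
            rw [Matrix.mulVec, dotProduct, Finset.mul_sum]
          have h2 : (∑ i, ∑ j, Le i j * (Real.exp (w j) * w j)) = 0 := by
            rw [Finset.sum_comm]
            refine Finset.sum_eq_zero fun j _ => ?_
            rw [← Finset.sum_mul, hcol, zero_mul]
          have h3 : (∑ i, ∑ j, Le i j * Real.exp (w j)) = 0 := by
            rw [Finset.sum_comm]
            refine Finset.sum_eq_zero fun j _ => ?_
            rw [← Finset.sum_mul, hcol, zero_mul]
          have h4 : (∑ i, ∑ j, Le i j * Real.exp (w i)) = 0 := by
            refine Finset.sum_eq_zero fun i _ => ?_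
            rw [← Finset.sum_mul, hrow, zero_mul]
          rw [h1, h2, h3, h4, hS]; ring
  have hzero : ∀ i j : Fin n, f i j = 0 := by
    intro i j
    have houter := (Finset.sum_eq_zero_iff_of_nonneg
      (fun i _ => Finset.sum_nonneg fun j _ => hfnn i j)).mp hsum i (Finset.mem_univ i)
    exact (Finset.sum_eq_zero_iff_of_nonneg fun j _ => hfnn i j).mp houter j
      (Finset.mem_univ j)
  intro i j hLij
  rcases eq_or_ne i j with rfl | hij
  · rfl
  · have hfij := hzero i j
    have hneg : Le i j < 0 := lt_of_le_of_ne (hoff i j hij) hLij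
    have : Real.exp (w j) * (w j - w i) - Real.exp (w j) + Real.exp (w i) = 0 := by
      by_contra hne
      have hpos : 0 < Real.exp (w j) * (w j - w i) - Real.exp (w j) + Real.exp (w i) :=
        lt_of_le_of_ne (psi_nonneg _ _) (Ne.symm hne)
      have hmul := mul_pos (neg_pos.mpr hneg) hpos
      simp only [hf] at hfij
      linarith
    exact psi_eq_zero this

/-- (Theorem 4, part (2).) If the extended graph of complexes is connected, a positive
`x**` is a steady state iff `Zᵀ Ln x** = Zᵀ Ln x*`; if moreover `Z` is surjective,
`x*` is the unique positive steady state. -/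
theorem stmt_11 (m c : ℕ) (Z : Matrix (Fin m) (Fin c) ℝ) (hZ : ∀ k i, 0 ≤ Z k i)
    (Ze : Matrix (Fin m) (Fin (c + 1)) ℝ)
    (hZe1 : ∀ (k : Fin m) (i : Fin c), Ze k i.castSucc = Z k i)
    (hZe2 : ∀ k : Fin m, Ze k (Fin.last c) = 0)
    (Le : Matrix (Fin (c + 1)) (Fin (c + 1)) ℝ)
    (hoff : ∀ i j, i ≠ j → Le i j ≤ 0)
    (hrow : ∀ i, ∑ j, Le i j = 0)
    (hcol : ∀ j, ∑ i, Le i j = 0)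
    (xs : Fin m → ℝ) (hxs : ∀ k, 0 < xs k)
    (hconn : ∀ i j : Fin (c + 1),
      Relation.ReflTransGen (fun a b => a ≠ b ∧ (Le a b ≠ 0 ∨ Le b a ≠ 0)) i j) :
    (∀ x : Fin m → ℝ, (∀ k, 0 < x k) →
      (Ze.mulVec (Le.mulVec (fun i =>
          Real.exp (Zeᵀ.mulVec (fun k => Real.log (x k / xs k)) i))) = 0
        ↔ Zᵀ.mulVec (fun k => Real.log (x k)) = Zᵀ.mulVec (fun k => Real.log (xs k)))) ∧
    (Function.Surjective Z.mulVecLin →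
      (Ze.mulVec (Le.mulVec (fun i =>
          Real.exp (Zeᵀ.mulVec (fun k => Real.log (xs k / xs k)) i))) = 0) ∧
      (∀ x : Fin m → ℝ, (∀ k, 0 < x k) →
        Ze.mulVec (Le.mulVec (fun i =>
          Real.exp (Zeᵀ.mulVec (fun k => Real.log (x k / xs k)) i))) = 0 →
        x = xs)) := by
  -- main iff
  have main : ∀ x : Fin m → ℝ, (∀ k, 0 < x k) →
      (Ze.mulVec (Le.mulVec (fun i =>
          Real.exp (Zeᵀ.mulVec (fun k => Real.log (x k / xs k)) i))) = 0
        ↔ Zᵀ.mulVec (fun k => Real.log (x k)) = Zᵀ.mulVec (fun k => Real.log (xs k))) := by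
    intro x hx
    set v : Fin m → ℝ := fun k => Real.log (x k / xs k) with hv
    set w : Fin (c + 1) → ℝ := Zeᵀ.mulVec v with hw
    have hwlast : w (Fin.last c) = 0 := by
      simp [hw, Matrix.mulVec, dotProduct, Matrix.transpose_apply, hZe2]
    have hwcast : ∀ i : Fin c, w i.castSucc =
        (Zᵀ.mulVec fun k => Real.log (x k)) i - (Zᵀ.mulVec fun k => Real.log (xs k)) i := by
      intro i
      have : ∀ k, v k = Real.log (x k) - Real.log (xs k) := fun k =>
        Real.log_div (ne_of_gt (hx k)) (ne_of_gt (hxs k))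
      simp only [hw, Matrix.mulVec, dotProduct, Matrix.transpose_apply, hZe1, this,
        Pi.sub_apply]
      rw [← Finset.sum_sub_distrib]
      exact Finset.sum_congr rfl fun k _ => by ring
    constructor
    · intro hsteady
      -- derive w = 0 on all vertices
      have hS : ∑ i, w i * (Le.mulVec fun j => Real.exp (w j)) i = 0 := by
        have : v ⬝ᵥ (Ze.mulVec (Le.mulVec fun j => Real.exp (w j))) = 0 := by
          rw [hsteady]; simp [dotProduct]
        rw [Matrix.dotProduct_mulVec, ← Matrix.mulVec_transpose, ← hw,
          dotProduct] at this
        exact this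
      have hedge := laplacian_key Le hoff hrow hcol w hS
      have hstep : ∀ a b : Fin (c + 1),
          Relation.ReflTransGen (fun a b => a ≠ b ∧ (Le a b ≠ 0 ∨ Le b a ≠ 0)) a b →
          w a = w b := by
        intro a b h
        induction h with
        | refl => rfl
        | tail _ hbc ih =>
          rcases hbc.2 with h' | h'
          · exact ih.trans (hedge _ _ h')
          · exact ih.trans (hedge _ _ h').symm
      have hw0 : ∀ i, w i = 0 := fun i => (hstep i (Fin.last c) (hconn i _)).trans hwlast
      funext i
      have := hwcast i
      rw [hw0 i.castSucc] at this
      simpa using (sub_eq_zero.mp this.symm)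
    · intro heq
      have hw0 : ∀ i, w i = 0 := by
        intro i
        induction i using Fin.lastCases with
        | last => exact hwlast
        | cast i => rw [hwcast i, congrFun heq i, sub_self]
      have hLe1 : Le.mulVec (fun j => Real.exp (w j)) = 0 := by
        funext i
        simp only [Matrix.mulVec, dotProduct, hw0, Real.exp_zero, mul_one, Pi.zero_apply]
        exact hrow i
      rw [show (fun i => Real.exp (Zeᵀ.mulVec (fun k => Real.log (x k / xs k)) i))
        = fun j => Real.exp (w j) from rfl, hLe1, Matrix.mulVec_zero]
  refine ⟨main, fun hsurj => ?_⟩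
  have hxs_steady : Ze.mulVec (Le.mulVec (fun i =>
      Real.exp (Zeᵀ.mulVec (fun k => Real.log (xs k / xs k)) i))) = 0 :=
    (main xs hxs).mpr rfl
  refine ⟨hxs_steady, fun x hx hst => ?_⟩
  have heq := (main x hx).mp hst
  set d : Fin m → ℝ := fun k => Real.log (x k) - Real.log (xs k) with hd
  have hZd : Zᵀ.mulVec d = 0 := by
    funext i
    have : (Zᵀ.mulVec d) i = (Zᵀ.mulVec fun k => Real.log (x k)) i
        - (Zᵀ.mulVec fun k => Real.log (xs k)) i := by
      simp only [Matrix.mulVec, dotProduct, hd]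
      rw [← Finset.sum_sub_distrib]
      exact Finset.sum_congr rfl fun k _ => by ring
    rw [this, heq, sub_self, Pi.zero_apply]
  obtain ⟨u, hu⟩ := hsurj d
  rw [Matrix.mulVecLin_apply] at hu
  have hdd : d ⬝ᵥ d = 0 := by
    calc d ⬝ᵥ d = d ⬝ᵥ (Z.mulVec u) := by rw [hu]
      _ = (Zᵀ.mulVec d) ⬝ᵥ u := by
          rw [Matrix.dotProduct_mulVec, ← Matrix.mulVec_transpose]
      _ = 0 := by rw [hZd]; simp [dotProduct]
  have hd0 : d = 0 := dotProduct_self_eq_zero.mp hdd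
  funext k
  have : Real.log (x k) = Real.log (xs k) := by
    have := congrFun hd0 k
    simp only [hd, Pi.zero_apply] at this
    linarith
  calc x k = Real.exp (Real.log (x k)) := (Real.exp_log (hx k)).symm
    _ = Real.exp (Real.log (xs k)) := by rw [this]
    _ = xs k := Real.exp_log (hxs k)
end

section
/- Let S be a real m×r matrix and let x* ∈ ℝ^m and x_0 ∈ ℝ^m be strictly positive vectors. Then there exists a unique strictly positive vector x_1 ∈ ℝ^m such that Sᵀ Ln x_1 = Sᵀ Ln x* and x_1 − x_0 ∈ im(S). -/
open Matrix Filter Real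

private lemma birch_uniq (m r : ℕ) (S : Matrix (Fin m) (Fin r) ℝ) (x1 x2 : Fin m → ℝ)
    (h1p : ∀ k, 0 < x1 k) (h2p : ∀ k, 0 < x2 k)
    (heq : Sᵀ.mulVec (fun k => Real.log (x1 k)) = Sᵀ.mulVec (fun k => Real.log (x2 k)))
    (hd : x1 - x2 ∈ LinearMap.range S.mulVecLin) : x1 = x2 := by
  obtain ⟨c, hc⟩ := hd
  set w : Fin m → ℝ := fun k => Real.log (x1 k) - Real.log (x2 k) with hw
  have hSw : Sᵀ.mulVec w = 0 := by
    have : Sᵀ.mulVec w = Sᵀ.mulVec (fun k => Real.log (x1 k)) - Sᵀ.mulVec (fun k => Real.log (x2 k)) := by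
      rw [← Matrix.mulVec_sub]; rfl
    rw [this, heq, sub_self]
  have hdot : (x1 - x2) ⬝ᵥ w = 0 := by
    rw [← hc, Matrix.mulVecLin_apply, dotProduct_comm, Matrix.dotProduct_mulVec,
      ← Matrix.mulVec_transpose, hSw, zero_dotProduct]
  have hterm : ∀ k, 0 ≤ (x1 k - x2 k) * w k := by
    intro k
    rcases le_total (x1 k) (x2 k) with h | h
    · have h1 : x1 k - x2 k ≤ 0 := by linarith
      have h2 : w k ≤ 0 := by
        simp only [hw, sub_nonpos]; exact Real.log_le_log (h1p k) h
      nlinarith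
    · exact mul_nonneg (by linarith)
        (by simp only [hw, sub_nonneg]; exact Real.log_le_log (h2p k) h)
  have hall : ∀ k ∈ Finset.univ, (x1 k - x2 k) * w k = 0 := by
    rw [← Finset.sum_eq_zero_iff_of_nonneg (fun k _ => hterm k)]
    simpa [dotProduct, Pi.sub_apply] using hdot
  funext k
  have h0 := hall k (Finset.mem_univ k)
  by_contra hne
  rcases lt_or_gt_of_ne hne with h | h
  · have hl : w k < 0 := by
      simp only [hw, sub_neg]; exact Real.log_lt_log (h1p k) h
    nlinarith
  · have hl : 0 < w k := by
      simp only [hw, sub_pos]; exact Real.log_lt_log (h2p k) h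
    nlinarith

private lemma min_tendsto_atTop {α : Type*} {l : Filter α} {f g : α → ℝ}
    (hf : Tendsto f l atTop) (hg : Tendsto g l atTop) :
    Tendsto (fun x => min (f x) (g x)) l atTop :=
  tendsto_atTop.2 fun b =>
    ((tendsto_atTop.1 hf b).and (tendsto_atTop.1 hg b)).mono fun _ h => le_min h.1 h.2

private lemma birch_min (m : ℕ) (hm : 0 < m)
    (xs x0 : Fin m → ℝ) (hxs : ∀ k, 0 < xs k) (hx0 : ∀ k, 0 < x0 k)
    (W : Submodule ℝ (EuclideanSpace ℝ (Fin m)))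
    (G : EuclideanSpace ℝ (Fin m) → ℝ)
    (hG : ∀ w, G w = (∑ k, xs k * Real.exp (w k)) - ∑ k, x0 k * w k)
    (hGcont : Continuous G) :
    ∃ w₀ : W, ∀ w : W, G w₀ ≤ G w := by
  classical
  haveI : Nonempty (Fin m) := ⟨⟨0, hm⟩⟩
  obtain ⟨ka, -, hka⟩ := Finset.exists_min_image Finset.univ xs ⟨⟨0, hm⟩, Finset.mem_univ _⟩
  obtain ⟨kb, -, hkb⟩ := Finset.exists_max_image Finset.univ x0 ⟨⟨0, hm⟩, Finset.mem_univ _⟩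
  obtain ⟨kc, -, hkc⟩ := Finset.exists_min_image Finset.univ x0 ⟨⟨0, hm⟩, Finset.mem_univ _⟩
  set a := xs ka with ha
  set b := x0 kb with hb
  set c := x0 kc with hc
  have ha0 : 0 < a := hxs ka
  have hb0 : 0 < b := hx0 kb
  have hc0 : 0 < c := hx0 kc
  set L : ℝ := -(2 * b ^ 2 / a) with hL
  have hL0 : L ≤ 0 := by
    rw [hL]
    have : 0 ≤ 2 * b ^ 2 / a := by positivity
    linarith
  have hexp_quad : ∀ t : ℝ, 0 ≤ t → t ^ 2 / 4 ≤ Real.exp t := by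
    intro t ht
    have h1 := Real.add_one_le_exp (t / 2)
    have h2 : Real.exp (t / 2) * Real.exp (t / 2) = Real.exp t := by
      rw [← Real.exp_add]; ring_nf
    nlinarith [Real.exp_pos (t / 2)]
  set ρ : ℝ → ℝ := fun s => min (c * s) (a / 8 * s ^ 2 - 2 * b ^ 2 / a) with hρ
  have hcoord : ∀ (k : Fin m) (t : ℝ), ρ |t| ≤ xs k * Real.exp t - x0 k * t := by
    intro k t
    rcases le_or_gt 0 t with ht | ht
    · refine le_trans (min_le_right _ _) ?_
      rw [abs_of_nonneg ht]
      have h1 := hexp_quad t ht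
      have h2 := hka k (Finset.mem_univ k)
      have h3 := hkb k (Finset.mem_univ k)
      have h4 := Real.exp_pos t
      have key : a / 8 * t ^ 2 - 2 * b ^ 2 / a ≤ a * (t ^ 2 / 4) - b * t := by
        have hq : 2 * b ^ 2 / a * a = 2 * b ^ 2 := div_mul_cancel₀ _ ha0.ne'
        nlinarith [sq_nonneg (a * t - 4 * b), mul_pos ha0 ha0]
      nlinarith
    · refine le_trans (min_le_left _ _) ?_
      rw [abs_of_neg ht]
      have h2 := hkc k (Finset.mem_univ k)
      nlinarith [(hxs k).le, (Real.exp_pos t).le, mul_pos (hxs k) (Real.exp_pos t)]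
  have hLbound : ∀ (k : Fin m) (t : ℝ), L ≤ xs k * Real.exp t - x0 k * t := by
    intro k t
    refine le_trans (le_min ?_ ?_) (hcoord k t)
    · have : (0:ℝ) ≤ c * |t| := mul_nonneg hc0.le (abs_nonneg t)
      linarith
    · have : (0:ℝ) ≤ a / 8 * |t| ^ 2 := by positivity
      rw [hL]; linarith
  have hlow : ∀ w : EuclideanSpace ℝ (Fin m),
      ρ (‖w‖ / Real.sqrt m) + (m - 1 : ℝ) * L ≤ G w := by
    intro w
    obtain ⟨k0, -, hk0⟩ := Finset.exists_max_image Finset.univ (fun k => |w k|)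
      ⟨⟨0, hm⟩, Finset.mem_univ _⟩
    have hsqm : (0:ℝ) < Real.sqrt m := Real.sqrt_pos.2 (by exact_mod_cast hm)
    have hnorm : ‖w‖ ≤ Real.sqrt m * |w k0| := by
      rw [EuclideanSpace.norm_eq]
      have h1 : ∑ i, ‖w i‖ ^ 2 ≤ (m : ℝ) * |w k0| ^ 2 := by
        calc ∑ i, ‖w i‖ ^ 2 ≤ ∑ _i : Fin m, |w k0| ^ 2 := by
              refine Finset.sum_le_sum fun i _ => ?_
              rw [Real.norm_eq_abs]
              exact pow_le_pow_left₀ (abs_nonneg _) (hk0 i (Finset.mem_univ i)) 2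
          _ = (m : ℝ) * |w k0| ^ 2 := by simp [Finset.sum_const, Finset.card_univ]
      calc Real.sqrt (∑ i, ‖w i‖ ^ 2) ≤ Real.sqrt ((m : ℝ) * |w k0| ^ 2) := Real.sqrt_le_sqrt h1
        _ = Real.sqrt m * |w k0| := by
            rw [Real.sqrt_mul (by positivity), Real.sqrt_sq (abs_nonneg _)]
    have hs : ‖w‖ / Real.sqrt m ≤ |w k0| := by
      rw [div_le_iff₀ hsqm]; linarith [hnorm, mul_comm (Real.sqrt m) |w k0|]
    have hsnn : 0 ≤ ‖w‖ / Real.sqrt m := by positivity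
    have hmono : ρ (‖w‖ / Real.sqrt m) ≤ ρ |w k0| := by
      refine min_le_min ?_ ?_
      · exact mul_le_mul_of_nonneg_left hs hc0.le
      · have : (‖w‖ / Real.sqrt m) ^ 2 ≤ |w k0| ^ 2 := pow_le_pow_left₀ hsnn hs 2
        nlinarith
    have hsum : G w = ∑ k, (xs k * Real.exp (w k) - x0 k * w k) := by
      rw [hG, Finset.sum_sub_distrib]
    rw [hsum]
    have hsplit := Finset.add_sum_erase Finset.univ
      (fun k => xs k * Real.exp (w k) - x0 k * w k) (Finset.mem_univ k0)
    rw [← hsplit]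
    beta_reduce
    have h2 : (m - 1 : ℝ) * L ≤ ∑ k ∈ Finset.univ.erase k0,
        (xs k * Real.exp (w k) - x0 k * w k) := by
      have := Finset.card_nsmul_le_sum (Finset.univ.erase k0)
        (fun k => xs k * Real.exp (w k) - x0 k * w k) L (fun k _ => hLbound k (w k))
      rw [Finset.card_erase_of_mem (Finset.mem_univ k0), Finset.card_univ, Fintype.card_fin] at this
      have hcast : ((m - 1 : ℕ) : ℝ) = (m : ℝ) - 1 := by
        rw [Nat.cast_sub hm]; simp
      rw [nsmul_eq_mul, hcast] at this
      exact this
    have h1 : ρ (‖w‖ / Real.sqrt m) ≤ xs k0 * Real.exp (w k0) - x0 k0 * w k0 :=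
      le_trans hmono (hcoord k0 (w k0))
    exact add_le_add h1 h2
  have hcoer : Tendsto (fun w : W => G w) (cocompact W) atTop := by
    have hdiv : Tendsto (fun s : ℝ => s / Real.sqrt m) atTop atTop := by
      apply Tendsto.atTop_div_const (Real.sqrt_pos.2 (by exact_mod_cast hm)) tendsto_id
    have hρt : Tendsto (fun s : ℝ => ρ (s / Real.sqrt m)) atTop atTop := by
      apply min_tendsto_atTop
      · exact (Tendsto.const_mul_atTop hc0 hdiv)
      · have hp : Tendsto (fun u : ℝ => u ^ 2) atTop atTop := tendsto_pow_atTop two_ne_zero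
        have := Tendsto.const_mul_atTop (by positivity : (0:ℝ) < a / 8) (hp.comp hdiv)
        simpa [sub_eq_add_neg, Function.comp] using
          tendsto_atTop_add_const_right atTop (-(2 * b ^ 2 / a)) this
    have hρt2 : Tendsto (fun s : ℝ => ρ (s / Real.sqrt m) + (m - 1 : ℝ) * L) atTop atTop :=
      tendsto_atTop_add_const_right _ _ hρt
    have hnormt : Tendsto (fun w : W => ‖(w : EuclideanSpace ℝ (Fin m))‖) (cocompact W) atTop := by
      have : Tendsto (norm : W → ℝ) (cocompact W) atTop := tendsto_norm_cocompact_atTop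
      exact this
    exact tendsto_atTop_mono (fun w => hlow w) (hρt2.comp hnormt)
  exact (hGcont.comp continuous_subtype_val).exists_forall_le hcoer

private lemma birch_concl (m r : ℕ) (S : Matrix (Fin m) (Fin r) ℝ)
    (xs x0 : Fin m → ℝ) (hxs : ∀ k, 0 < xs k) (hx0 : ∀ k, 0 < x0 k)
    (T : EuclideanSpace ℝ (Fin r) →ₗ[ℝ] EuclideanSpace ℝ (Fin m))
    (hT : ∀ v, T v = S.mulVec v)
    (W : Submodule ℝ (EuclideanSpace ℝ (Fin m)))
    (hW : W = (LinearMap.range T)ᗮ)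
    (G : EuclideanSpace ℝ (Fin m) → ℝ)
    (hG : G = fun w => (∑ k, xs k * Real.exp (w k)) - ∑ k, x0 k * w k)
    (w₀ : W) (hw₀ : ∀ w : W, G w₀ ≤ G w) :
    ∃ x1 : Fin m → ℝ, (∀ k, 0 < x1 k) ∧
      Sᵀ.mulVec (fun k => Real.log (x1 k)) = Sᵀ.mulVec (fun k => Real.log (xs k)) ∧
      x1 - x0 ∈ LinearMap.range S.mulVecLin := by
  classical
  have hgrad : ∀ v : EuclideanSpace ℝ (Fin m), v ∈ W →
      (∑ k, (xs k * Real.exp (w₀.1 k) - x0 k) * v k) = 0 := by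
    intro v hv
    set D : ℝ := ∑ k, (xs k * Real.exp (w₀.1 k) - x0 k) * v k with hD
    have hderiv : HasDerivAt (fun t : ℝ => G (w₀.1 + t • v)) D 0 := by
      have hfun : (fun t : ℝ => G (w₀.1 + t • v)) = fun t =>
          (∑ k, xs k * Real.exp (w₀.1 k + t * v k)) - ∑ k, x0 k * (w₀.1 k + t * v k) := by
        funext t
        rw [hG]
        simp [PiLp.add_apply, PiLp.smul_apply, smul_eq_mul]
      rw [hfun]
      have h1 : ∀ k : Fin m, HasDerivAt (fun t : ℝ => w₀.1 k + t * v k) (v k) 0 := by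
        intro k
        simpa using (hasDerivAt_mul_const (v k)).const_add (w₀.1 k)
      have h2 : HasDerivAt (fun t : ℝ => ∑ k, xs k * Real.exp (w₀.1 k + t * v k))
          (∑ k, xs k * (Real.exp (w₀.1 k + 0 * v k) * v k)) 0 :=
        HasDerivAt.fun_sum fun k _ => ((h1 k).exp.const_mul (xs k))
      have h3 : HasDerivAt (fun t : ℝ => ∑ k, x0 k * (w₀.1 k + t * v k))
          (∑ k, x0 k * v k) 0 :=
        HasDerivAt.fun_sum fun k _ => ((h1 k).const_mul (x0 k))
      have := h2.fun_sub h3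
      convert this using 1
      case e'_4 => rfl
      case e'_5 => rfl
      rw [hD, ← Finset.sum_sub_distrib]
      refine Finset.sum_congr rfl fun k _ => by simp only [zero_mul, add_zero]; ring
    have hlocal : IsLocalMin (fun t : ℝ => G (w₀.1 + t • v)) 0 := by
      apply Filter.Eventually.of_forall
      intro t
      have hmem : w₀.1 + t • v ∈ W := W.add_mem w₀.2 (W.smul_mem t hv)
      have := hw₀ ⟨w₀.1 + t • v, hmem⟩
      simpa using this
    exact hlocal.hasDerivAt_eq_zero hderiv
  set u : EuclideanSpace ℝ (Fin m) := WithLp.toLp 2 (fun k => xs k * Real.exp (w₀.1 k) - x0 k) with hu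
  have huW : u ∈ Wᗮ := by
    rw [Submodule.mem_orthogonal]
    intro v hv
    have := hgrad v hv
    rw [← this]
    simp [PiLp.inner_apply, RCLike.inner_apply, hu, mul_comm]
  have huV : u ∈ LinearMap.range T := by
    rw [← Submodule.orthogonal_orthogonal (LinearMap.range T), ← hW]
    exact huW
  obtain ⟨cv, hcv⟩ := huV
  refine ⟨fun k => xs k * Real.exp (w₀.1 k), fun k => mul_pos (hxs k) (Real.exp_pos _), ?_, ?_⟩
  · have hSw : Sᵀ.mulVec (fun k => w₀.1 k) = 0 := by
      funext j
      have hmem : T (WithLp.toLp 2 (Pi.single j 1)) ∈ LinearMap.range T := ⟨_, rfl⟩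
      have hmem' : w₀.1 ∈ (LinearMap.range T)ᗮ := hW ▸ w₀.2
      have h0 := (Submodule.mem_orthogonal _ _).1 hmem' _ hmem
      simp only [PiLp.inner_apply, hT, WithLp.ofLp_toLp, Matrix.mulVec_single] at h0
      simp only [PiLp.inner_apply, RCLike.inner_apply] at h0
      simp only [Matrix.mulVec, dotProduct, Matrix.transpose_apply, Pi.zero_apply]
      rw [← h0]
      congr 1
      funext k
      simp [mul_comm]
    have hlog : (fun k => Real.log (xs k * Real.exp (w₀.1 k)))
        = (fun k => Real.log (xs k)) + fun k => w₀.1 k := by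
      funext k
      simp [Real.log_mul (hxs k).ne' (Real.exp_ne_zero _), Real.log_exp]
    rw [hlog, Matrix.mulVec_add, hSw, add_zero]
  · refine ⟨cv, ?_⟩
    rw [Matrix.mulVecLin_apply]
    funext k
    have hk : T cv k = u k := by rw [hcv]
    rw [hT] at hk
    simp only [Pi.sub_apply]
    rw [hk, hu]

private lemma birch_exists (m r : ℕ) (hm : 0 < m) (S : Matrix (Fin m) (Fin r) ℝ)
    (xs x0 : Fin m → ℝ) (hxs : ∀ k, 0 < xs k) (hx0 : ∀ k, 0 < x0 k) :
    ∃ x1 : Fin m → ℝ, (∀ k, 0 < x1 k) ∧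
      Sᵀ.mulVec (fun k => Real.log (x1 k)) = Sᵀ.mulVec (fun k => Real.log (xs k)) ∧
      x1 - x0 ∈ LinearMap.range S.mulVecLin := by
  classical
  let T : EuclideanSpace ℝ (Fin r) →ₗ[ℝ] EuclideanSpace ℝ (Fin m) :=
    { toFun := fun v => WithLp.toLp 2 (S.mulVec v)
      map_add' := fun u v => by ext k; simp [Matrix.mulVec_add]
      map_smul' := fun c v => by ext k; simp [Matrix.mulVec_smul] }
  let W : Submodule ℝ (EuclideanSpace ℝ (Fin m)) := (LinearMap.range T)ᗮ
  let G : EuclideanSpace ℝ (Fin m) → ℝ :=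
    fun w => (∑ k, xs k * Real.exp (w k)) - ∑ k, x0 k * w k
  have hGcont : Continuous G := by
    apply Continuous.sub
    · exact continuous_finset_sum _ fun k _ =>
        continuous_const.mul (Real.continuous_exp.comp (EuclideanSpace.proj k).continuous)
    · exact continuous_finset_sum _ fun k _ =>
        continuous_const.mul (EuclideanSpace.proj k).continuous
  obtain ⟨w₀, hw₀⟩ := birch_min m hm xs x0 hxs hx0 W G (fun w => rfl) hGcont
  exact birch_concl m r S xs x0 hxs hx0 T (fun v => rfl) W rfl G rfl w₀ hw₀

/-- (Feinberg; used in Theorem 4, part (3).) Given a stoichiometric matrix `S`, a positive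
equilibrium `x*` and a positive initial condition `x₀`, there is a unique positive `x₁`
with `Sᵀ Ln x₁ = Sᵀ Ln x*` and `x₁ − x₀ ∈ im S`. -/
theorem stmt_12 (m r : ℕ) (S : Matrix (Fin m) (Fin r) ℝ)
    (xs x0 : Fin m → ℝ) (hxs : ∀ k, 0 < xs k) (hx0 : ∀ k, 0 < x0 k) :
    ∃! x1 : Fin m → ℝ, (∀ k, 0 < x1 k) ∧
      Sᵀ.mulVec (fun k => Real.log (x1 k)) = Sᵀ.mulVec (fun k => Real.log (xs k)) ∧
      x1 - x0 ∈ LinearMap.range S.mulVecLin := by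
  rcases Nat.eq_zero_or_pos m with hm | hm
  · subst hm
    refine ⟨x0, ⟨hx0, ?_, ?_⟩, fun y _ => funext fun k => k.elim0⟩
    · funext j
      simp [Matrix.mulVec, dotProduct]
    · simp only [sub_self]
      exact Submodule.zero_mem _
  · obtain ⟨x1, hpos, heq, hmem⟩ := birch_exists m r hm S xs x0 hxs hx0
    refine ⟨x1, ⟨hpos, heq, hmem⟩, ?_⟩
    rintro y ⟨hypos, hyeq, hymem⟩
    refine birch_uniq m r S y x1 hypos hpos (by rw [hyeq, heq]) ?_
    have : y - x1 = (y - x0) - (x1 - x0) := by ring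
    rw [this]
    exact Submodule.sub_mem _ hymem hmem
end

section
/- Let Z be a real m×c matrix with nonnegative entries, 𝓛 a real c×c matrix whose off-diagonal entries are nonpositive and whose row sums and column sums are all zero, and x* ∈ ℝ^m strictly positive. Define the Gibbs free energy G(x) = Σ_{i=1}^m ( x_i ln(x_i/x*_i) + x*_i − x_i ) for strictly positive x, and the vector field f(x) = −Z 𝓛 Exp(Zᵀ Ln(x/x*)). Then for every strictly positive x ∈ ℝ^m the directional derivative of G along f is nonpositive: (Ln(x/x*))ᵀ f(x) ≤ 0, with equality if and only if f(x) = 0, i.e. x is an equilibrium. -/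
open Matrix

private lemma exp_bracket_nonpos (a b : ℝ) :
    Real.exp b * (a - b + 1) - Real.exp a ≤ 0 := by
  have h := Real.add_one_le_exp (a - b)
  have hb : (0:ℝ) < Real.exp b := Real.exp_pos b
  have : Real.exp b * (a - b + 1) ≤ Real.exp b * Real.exp (a - b) :=
    mul_le_mul_of_nonneg_left h hb.le
  have he : Real.exp b * Real.exp (a - b) = Real.exp a := by
    rw [← Real.exp_add, show b + (a - b) = a by ring]
  linarith

private lemma sum_identity {c : ℕ} (L : Matrix (Fin c) (Fin c) ℝ)
    (hrow : ∀ i, ∑ j, L i j = 0)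
    (hcol : ∀ j, ∑ i, L i j = 0)
    (y : Fin c → ℝ) :
    ∑ i, ∑ j, y i * (L i j * Real.exp (y j)) =
      ∑ i, ∑ j, L i j * (Real.exp (y j) * (y i - y j + 1) - Real.exp (y i)) := by
  have h2 : ∑ i, ∑ j, (Real.exp (y j) * (1 - y j)) * L i j = 0 := by
    rw [Finset.sum_comm]
    simp only [← Finset.mul_sum, hcol, mul_zero, Finset.sum_const_zero]
  have h3 : ∑ i : Fin c, ∑ j, Real.exp (y i) * L i j = 0 := by
    simp only [← Finset.mul_sum, hrow, mul_zero, Finset.sum_const_zero]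
  have key : ∑ i, ∑ j, (L i j * (Real.exp (y j) * (y i - y j + 1) - Real.exp (y i))
      - y i * (L i j * Real.exp (y j))) = 0 := by
    have e1 : ∀ i j : Fin c,
        L i j * (Real.exp (y j) * (y i - y j + 1) - Real.exp (y i))
          - y i * (L i j * Real.exp (y j)) =
        (Real.exp (y j) * (1 - y j)) * L i j - Real.exp (y i) * L i j := by
      intro i j; ring
    simp only [e1, Finset.sum_sub_distrib, h2, h3]
    ring
  rw [Finset.sum_congr rfl (fun i _ => Finset.sum_sub_distrib _ _),
    Finset.sum_sub_distrib, sub_eq_zero] at key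
  exact key.symm

private lemma key_lemma {c : ℕ} (L : Matrix (Fin c) (Fin c) ℝ)
    (hoff : ∀ i j, i ≠ j → L i j ≤ 0)
    (hrow : ∀ i, ∑ j, L i j = 0)
    (hcol : ∀ j, ∑ i, L i j = 0)
    (y : Fin c → ℝ) :
    0 ≤ y ⬝ᵥ L.mulVec (fun i => Real.exp (y i)) ∧
    (y ⬝ᵥ L.mulVec (fun i => Real.exp (y i)) = 0 →
      L.mulVec (fun i => Real.exp (y i)) = 0) := by
  have hdot : y ⬝ᵥ L.mulVec (fun i => Real.exp (y i)) =
      ∑ i, ∑ j, y i * (L i j * Real.exp (y j)) := by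
    simp [dotProduct, Matrix.mulVec, Finset.mul_sum]
  have hterm : ∀ i j : Fin c,
      0 ≤ L i j * (Real.exp (y j) * (y i - y j + 1) - Real.exp (y i)) := by
    intro i j
    by_cases hij : i = j
    · subst hij; simp
    · nlinarith [hoff i j hij, exp_bracket_nonpos (y i) (y j)]
  have hsum := sum_identity L hrow hcol y
  constructor
  · rw [hdot, hsum]
    exact Finset.sum_nonneg fun i _ => Finset.sum_nonneg fun j _ => hterm i j
  · intro h0
    rw [hdot, hsum] at h0
    -- each term is zero
    have hz : ∀ i ∈ Finset.univ, ∀ j ∈ Finset.univ,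
        L i j * (Real.exp (y j) * (y i - y j + 1) - Real.exp (y i)) = 0 := by
      have h1' : ∀ i ∈ Finset.univ,
          ∑ j, L i j * (Real.exp (y j) * (y i - y j + 1) - Real.exp (y i)) = 0 :=
        (Finset.sum_eq_zero_iff_of_nonneg
          (fun i _ => Finset.sum_nonneg fun j _ => hterm i j)).mp h0
      intro i hi j hj
      exact (Finset.sum_eq_zero_iff_of_nonneg (fun j _ => hterm i j)).mp (h1' i hi) j hj
    -- whenever L i j ≠ 0 and i ≠ j, y i = y j
    have hyeq : ∀ i j : Fin c, L i j ≠ 0 → y i = y j := by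
      intro i j hLij
      by_cases hij : i = j
      · rw [hij]
      · have hb0 : Real.exp (y j) * (y i - y j + 1) - Real.exp (y i) = 0 := by
          have := hz i (Finset.mem_univ i) j (Finset.mem_univ j)
          rcases mul_eq_zero.mp this with h | h
          · exact absurd h hLij
          · exact h
        by_contra hne
        have hne' : y i - y j ≠ 0 := sub_ne_zero_of_ne hne
        have hlt := Real.add_one_lt_exp hne'
        have hb : (0:ℝ) < Real.exp (y j) := Real.exp_pos _
        have : Real.exp (y j) * (y i - y j + 1) < Real.exp (y j) * Real.exp (y i - y j) :=
          (mul_lt_mul_iff_right₀ hb).mpr hlt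
        have he : Real.exp (y j) * Real.exp (y i - y j) = Real.exp (y i) := by
          rw [← Real.exp_add, show y j + (y i - y j) = y i by ring]
        linarith
    funext i
    have : L.mulVec (fun i => Real.exp (y i)) i =
        ∑ j, L i j * (Real.exp (y j) - Real.exp (y i)) := by
      simp only [Matrix.mulVec, dotProduct, mul_sub, Finset.sum_sub_distrib,
        ← Finset.sum_mul, hrow, zero_mul, sub_zero]
    rw [this]
    have : ∀ j ∈ Finset.univ, L i j * (Real.exp (y j) - Real.exp (y i)) = 0 := by
      intro j _
      by_cases hLij : L i j = 0
      · rw [hLij, zero_mul]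
      · rw [hyeq i j hLij]; ring
    simp [Finset.sum_congr rfl this]

/-- Lyapunov property of the Gibbs free energy
`G(x) = Σᵢ (xᵢ ln(xᵢ/x*ᵢ) + x*ᵢ − xᵢ)`: along the complex-balanced dynamics
`f(x) = −Z 𝓛 Exp(Zᵀ Ln(x/x*))`, the directional derivative `(Ln(x/x*))ᵀ f(x)` is
nonpositive, and vanishes iff `f(x) = 0`, i.e. `x` is an equilibrium. -/
theorem stmt_13 (m c : ℕ) (Z : Matrix (Fin m) (Fin c) ℝ) (hZ : ∀ k i, 0 ≤ Z k i)
    (L : Matrix (Fin c) (Fin c) ℝ)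
    (hoff : ∀ i j, i ≠ j → L i j ≤ 0)
    (hrow : ∀ i, ∑ j, L i j = 0)
    (hcol : ∀ j, ∑ i, L i j = 0)
    (xs : Fin m → ℝ) (hxs : ∀ k, 0 < xs k)
    (x : Fin m → ℝ) (hx : ∀ k, 0 < x k) :
    (fun k => Real.log (x k / xs k)) ⬝ᵥ
      (-(Z.mulVec (L.mulVec (fun i =>
          Real.exp (Zᵀ.mulVec (fun k => Real.log (x k / xs k)) i))))) ≤ 0 ∧
    ((fun k => Real.log (x k / xs k)) ⬝ᵥ
      (-(Z.mulVec (L.mulVec (fun i =>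
          Real.exp (Zᵀ.mulVec (fun k => Real.log (x k / xs k)) i))))) = 0 ↔
      -(Z.mulVec (L.mulVec (fun i =>
          Real.exp (Zᵀ.mulVec (fun k => Real.log (x k / xs k)) i)))) = 0) := by
  set μ : Fin m → ℝ := fun k => Real.log (x k / xs k) with hμ
  set y : Fin c → ℝ := Zᵀ.mulVec μ with hy
  set w : Fin c → ℝ := fun i => Real.exp (y i) with hw
  obtain ⟨hpos, heq⟩ := key_lemma L hoff hrow hcol y
  have hdot : μ ⬝ᵥ (-(Z.mulVec (L.mulVec w))) = -(y ⬝ᵥ L.mulVec w) := by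
    rw [dotProduct_neg, Matrix.dotProduct_mulVec, hy, Matrix.mulVec_transpose]
  constructor
  · rw [hdot]; linarith
  · rw [hdot]
    constructor
    · intro h
      have : y ⬝ᵥ L.mulVec w = 0 := by linarith
      rw [heq this, Matrix.mulVec_zero, neg_zero]
    · intro h
      have h' : Z.mulVec (L.mulVec w) = 0 := by
        have := congrArg Neg.neg h
        simpa using this
      have h2 : y ⬝ᵥ L.mulVec w = μ ⬝ᵥ Z.mulVec (L.mulVec w) := by
        rw [hy, Matrix.mulVec_transpose, ← Matrix.dotProduct_mulVec]
      rw [h2, h']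
      simp
end

section
/- Let L_e be a real (c+1)×(c+1) matrix whose off-diagonal entries are nonpositive and all of whose column sums are zero, such that the directed graph on vertices {1,…,c+1} with an edge from i to j (i ≠ j) whenever (L_e)_{ji} ≠ 0 is strongly connected. Let Z_e be an m×(c+1) matrix with nonnegative integer entries whose last column is zero, and assume every species appears in some complex, i.e. for every 1 ≤ k ≤ m there exists 1 ≤ i ≤ c with (Z_e)_{ki} > 0. Define ψ : ℝ^m_{≥0} → ℝ^{c+1} by ψ_i(x) = Π_{k=1}^m x_k^{(Z_e)_{ki}} (so ψ_{c+1}(x) = 1). Then there is no vector x on the boundary of the nonnegative orthant (i.e. x ≥ 0 componentwise with at least one component equal to zero) satisfying L_e ψ(x) = 0. -/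
open Matrix

/-- No boundary steady states: for a strongly connected extended graph of complexes with
out-degree Laplacian `L_e` (edge `i → j` iff `(L_e)_{ji} ≠ 0`), zero-complex composition
column zero, and every species appearing in some complex, there is no nonnegative vector
`x` with a zero component satisfying `L_e ψ(x) = 0`, where `ψᵢ(x) = Πₖ xₖ^{(Z_e)_{ki}}`. -/
theorem stmt_14 (m c : ℕ) (Le : Matrix (Fin (c + 1)) (Fin (c + 1)) ℝ)
    (hoff : ∀ i j, i ≠ j → Le i j ≤ 0)
    (hcol : ∀ j, ∑ i, Le i j = 0)
    (hsc : ∀ i j : Fin (c + 1),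
      Relation.ReflTransGen (fun a b => a ≠ b ∧ Le b a ≠ 0) i j)
    (Ze : Matrix (Fin m) (Fin (c + 1)) ℕ)
    (hlast : ∀ k, Ze k (Fin.last c) = 0)
    (hspecies : ∀ k : Fin m, ∃ i : Fin c, 0 < Ze k i.castSucc) :
    ¬ ∃ x : Fin m → ℝ, (∀ k, 0 ≤ x k) ∧ (∃ k, x k = 0) ∧
        Le.mulVec (fun i => ∏ k, x k ^ Ze k i) = 0 := by
  rintro ⟨x, hx, ⟨k₀, hk₀⟩, hLψ⟩
  set ψ : Fin (c + 1) → ℝ := fun i => ∏ k, x k ^ Ze k i with hψdef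
  have hψnn : ∀ i, 0 ≤ ψ i := fun i =>
    Finset.prod_nonneg fun k _ => pow_nonneg (hx k) _
  have hψlast : ψ (Fin.last c) = 1 := by
    simp [hψdef, hlast]
  obtain ⟨i₀, hi₀⟩ := hspecies k₀
  have hψi₀ : ψ i₀.castSucc = 0 := by
    apply Finset.prod_eq_zero (Finset.mem_univ k₀)
    rw [hk₀]
    exact zero_pow hi₀.ne'
  have closure : ∀ i, ψ i = 0 → ∀ j, j ≠ i → Le i j ≠ 0 → ψ j = 0 := by
    intro i hi j hji hne
    have hrow : ∑ j, Le i j * ψ j = 0 := by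
      have := congrFun hLψ i
      simpa [Matrix.mulVec, dotProduct, hψdef] using this
    have hrest : ∑ j ∈ Finset.univ.erase i, Le i j * ψ j = 0 := by
      have h := Finset.add_sum_erase Finset.univ (fun j => Le i j * ψ j)
        (Finset.mem_univ i)
      rw [hrow] at h
      simpa [hi] using h
    have hterm : Le i j * ψ j = 0 := by
      have hnp : ∀ a ∈ Finset.univ.erase i, Le i a * ψ a ≤ 0 := by
        intro a ha
        exact mul_nonpos_of_nonpos_of_nonneg
          (hoff i a (Finset.ne_of_mem_erase ha).symm) (hψnn a)
      have := (Finset.sum_eq_zero_iff_of_nonpos hnp).mp hrest j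
        (Finset.mem_erase.mpr ⟨hji, Finset.mem_univ j⟩)
      exact this
    rcases mul_eq_zero.mp hterm with h | h
    · exact absurd h hne
    · exact h
  have key : ∀ a, Relation.ReflTransGen (fun a b => a ≠ b ∧ Le b a ≠ 0) a i₀.castSucc →
      ψ a = 0 := by
    intro a h
    induction h using Relation.ReflTransGen.head_induction_on with
    | refl => exact hψi₀
    | head hab _ ih => exact closure _ ih _ hab.1 hab.2
  have hlast0 := key (Fin.last c) (hsc _ _)
  rw [hψlast] at hlast0
  exact one_ne_zero hlast0
end

section
/- Let 𝓛 be a real n×n matrix whose off-diagonal entries are nonpositive and whose row sums and column sums are all zero, and partition the index set into two nonempty subsets giving the block form 𝓛 = [[𝓛_11, 𝓛_12],[𝓛_21, 𝓛_22]], where 𝓛_22 is the principal submatrix indexed by the set of deleted vertices and is assumed invertible. Then the Schur complement 𝓛̂ = 𝓛_11 − 𝓛_12 𝓛_22^{-1} 𝓛_21 again has nonpositive off-diagonal entries, nonnegative diagonal entries, and all row sums and all column sums equal to zero (𝟙ᵀ𝓛̂ = 0 and 𝓛̂𝟙 = 0). -/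
open Matrix Finset Filter Topology

/-- Sign lemma: a matrix with nonpositive off-diagonal entries and strictly positive
row sums maps vectors with nonnegative image to nonnegative vectors. -/
lemma kron_sign_lemma {n : ℕ} (A : Matrix (Fin n) (Fin n) ℝ)
    (hoff : ∀ i j, i ≠ j → A i j ≤ 0) (hrs : ∀ i, 0 < ∑ j, A i j)
    (x : Fin n → ℝ) (hb : ∀ i, 0 ≤ A.mulVec x i) : ∀ i, 0 ≤ x i := by
  by_contra h
  push_neg at h
  obtain ⟨i0, hi0⟩ := h
  obtain ⟨k, -, hk⟩ := Finset.exists_min_image Finset.univ x ⟨i0, Finset.mem_univ i0⟩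
  have hxk : x k < 0 := lt_of_le_of_lt (hk i0 (Finset.mem_univ i0)) hi0
  have hle : A.mulVec x k ≤ (∑ j, A k j) * x k := by
    rw [Finset.sum_mul, Matrix.mulVec, dotProduct]
    refine Finset.sum_le_sum fun j _ => ?_
    rcases eq_or_ne k j with rfl | hne
    · exact le_rfl
    · exact mul_le_mul_of_nonpos_left (hk j (Finset.mem_univ j)) (hoff k j hne)
  have : A.mulVec x k < 0 := lt_of_le_of_lt hle (mul_neg_of_pos_of_neg (hrs k) hxk)
  exact absurd (hb k) (not_le.mpr this)

lemma kron_strict_unit {n : ℕ} (A : Matrix (Fin n) (Fin n) ℝ)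
    (hoff : ∀ i j, i ≠ j → A i j ≤ 0) (hrs : ∀ i, 0 < ∑ j, A i j) :
    IsUnit A.det := by
  rw [isUnit_iff_ne_zero]
  intro hdet
  obtain ⟨v, hv, hv0⟩ := (Matrix.exists_mulVec_eq_zero_iff).mpr hdet
  have h1 : ∀ i, 0 ≤ v i := kron_sign_lemma A hoff hrs v (fun i => by rw [hv0]; exact le_rfl)
  have h2 : ∀ i, 0 ≤ (-v) i := kron_sign_lemma A hoff hrs (-v) (fun i => by rw [Matrix.mulVec_neg, hv0]; simp)
  exact hv (funext fun i => le_antisymm (by simpa using h2 i) (h1 i))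

lemma kron_strict_inv_nonneg {n : ℕ} (A : Matrix (Fin n) (Fin n) ℝ)
    (hoff : ∀ i j, i ≠ j → A i j ≤ 0) (hrs : ∀ i, 0 < ∑ j, A i j) :
    ∀ i j, 0 ≤ A⁻¹ i j := by
  intro i j
  have hunit := kron_strict_unit A hoff hrs
  have key : ∀ k, 0 ≤ A.mulVec (fun l => A⁻¹ l j) k := by
    intro k
    have : A.mulVec (fun l => A⁻¹ l j) k = (A * A⁻¹) k j := by
      simp [Matrix.mulVec, Matrix.mul_apply, dotProduct]
    rw [this, Matrix.mul_nonsing_inv A hunit, Matrix.one_apply]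
    split <;> norm_num
  exact kron_sign_lemma A hoff hrs _ key i

/-- M-matrix property: a matrix with nonpositive off-diagonal entries, nonnegative
row sums, and invertible determinant has an entrywise nonnegative inverse. -/
lemma kron_inv_nonneg {n : ℕ} (A : Matrix (Fin n) (Fin n) ℝ)
    (hoff : ∀ i j, i ≠ j → A i j ≤ 0) (hrs : ∀ i, 0 ≤ ∑ j, A i j)
    (hunit : IsUnit A.det) : ∀ i j, 0 ≤ A⁻¹ i j := by
  intro i j
  have key : ∀ ε : ℝ, 0 < ε → 0 ≤ (A + ε • (1 : Matrix (Fin n) (Fin n) ℝ))⁻¹ i j := by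
    intro ε hε
    apply kron_strict_inv_nonneg
    · intro a b hab
      simpa [Matrix.add_apply, Matrix.smul_apply, Matrix.one_apply_ne hab] using hoff a b hab
    · intro a
      have h1 : ∑ jj, (A + ε • (1 : Matrix (Fin n) (Fin n) ℝ)) a jj
          = (∑ jj, A a jj) + ε := by
        simp [Matrix.add_apply, Matrix.smul_apply, Matrix.one_apply,
          Finset.sum_add_distrib, mul_ite]
      rw [h1]
      linarith [hrs a]
  have hc : ContinuousAt (fun M : Matrix (Fin n) (Fin n) ℝ => M⁻¹) A := by
    apply continuousAt_matrix_inv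
    rw [Ring.inverse_eq_inv']
    exact continuousAt_inv₀ (by simpa [isUnit_iff_ne_zero] using hunit)
  have hA : Tendsto (fun ε : ℝ => A + ε • (1 : Matrix (Fin n) (Fin n) ℝ)) (𝓝[>] 0) (𝓝 A) := by
    have hcont : Continuous fun ε : ℝ => A + ε • (1 : Matrix (Fin n) (Fin n) ℝ) :=
      continuous_const.add (continuous_id.smul continuous_const)
    simpa using (hcont.tendsto 0).mono_left nhdsWithin_le_nhds
  have ht : Tendsto (fun ε : ℝ => (A + ε • (1 : Matrix (Fin n) (Fin n) ℝ))⁻¹ i j)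
      (𝓝[>] 0) (𝓝 (A⁻¹ i j)) := by
    have h2 := hc.tendsto.comp hA
    exact (((continuous_apply j).comp (continuous_apply i)).tendsto _).comp h2
  exact ge_of_tendsto ht (eventually_nhdsWithin_of_forall fun ε hε => key ε hε)

/-- (Proposition 4, properties (1)-(2).) The Schur complement (Kron reduction) of a
balanced Laplacian matrix with respect to an invertible principal submatrix of deleted
vertices is again a balanced Laplacian: nonpositive off-diagonal entries, nonnegative
diagonal entries, and zero row and column sums. -/
theorem stmt_15 (p q : ℕ) (hp : 0 < p) (hq : 0 < q)
    (L : Matrix (Fin p ⊕ Fin q) (Fin p ⊕ Fin q) ℝ)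
    (hoff : ∀ i j, i ≠ j → L i j ≤ 0)
    (hrow : ∀ i, ∑ j, L i j = 0)
    (hcol : ∀ j, ∑ i, L i j = 0)
    (hinv : IsUnit (L.toBlocks₂₂).det) :
    (∀ i j, i ≠ j →
      (L.toBlocks₁₁ - L.toBlocks₁₂ * (L.toBlocks₂₂)⁻¹ * L.toBlocks₂₁) i j ≤ 0) ∧
    (∀ i, 0 ≤ (L.toBlocks₁₁ - L.toBlocks₁₂ * (L.toBlocks₂₂)⁻¹ * L.toBlocks₂₁) i i) ∧
    (∀ i, ∑ j, (L.toBlocks₁₁ - L.toBlocks₁₂ * (L.toBlocks₂₂)⁻¹ * L.toBlocks₂₁) i j = 0) ∧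
    (∀ j, ∑ i, (L.toBlocks₁₁ - L.toBlocks₁₂ * (L.toBlocks₂₂)⁻¹ * L.toBlocks₂₁) i j = 0) := by
  -- sign facts about the blocks
  have h12 : ∀ i k, L.toBlocks₁₂ i k ≤ 0 := fun i k => hoff _ _ (by simp)
  have h21 : ∀ l j, L.toBlocks₂₁ l j ≤ 0 := fun l j => hoff _ _ (by simp)
  have h11 : ∀ i j, i ≠ j → L.toBlocks₁₁ i j ≤ 0 := fun i j hij =>
    hoff _ _ (fun h => hij (Sum.inl_injective h))
  have h22off : ∀ a b, a ≠ b → L.toBlocks₂₂ a b ≤ 0 := fun a b hab =>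
    hoff _ _ (fun h => hab (Sum.inr_injective h))
  have h22rs : ∀ a, 0 ≤ ∑ b, L.toBlocks₂₂ a b := by
    intro a
    have key := hrow (Sum.inr a)
    rw [Fintype.sum_sum_type] at key
    have hneg : ∑ jp : Fin p, L (Sum.inr a) (Sum.inl jp) ≤ 0 :=
      Finset.sum_nonpos (fun jp _ => hoff _ _ (by simp))
    simp only [Matrix.toBlocks₂₂, Matrix.of_apply]
    linarith
  have hinvnn : ∀ a b, 0 ≤ (L.toBlocks₂₂)⁻¹ a b := kron_inv_nonneg _ h22off h22rs hinv
  -- the correction term is entrywise nonnegative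
  have hprodnn : ∀ i j, 0 ≤ (L.toBlocks₁₂ * (L.toBlocks₂₂)⁻¹ * L.toBlocks₂₁) i j := by
    intro i j
    rw [Matrix.mul_apply]
    refine Finset.sum_nonneg fun l _ => ?_
    have hA : (L.toBlocks₁₂ * (L.toBlocks₂₂)⁻¹) i l ≤ 0 := by
      rw [Matrix.mul_apply]
      exact Finset.sum_nonpos fun k _ => mul_nonpos_iff.mpr (Or.inr ⟨h12 i k, hinvnn k l⟩)
    nlinarith [h21 l j]
  -- off-diagonal entries
  have hoffS : ∀ i j, i ≠ j →
      (L.toBlocks₁₁ - L.toBlocks₁₂ * (L.toBlocks₂₂)⁻¹ * L.toBlocks₂₁) i j ≤ 0 := by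
    intro i j hij
    have := hprodnn i j
    have := h11 i j hij
    simp only [Matrix.sub_apply]
    linarith
  -- row sums are zero
  have hrowS : ∀ i, ∑ j,
      (L.toBlocks₁₁ - L.toBlocks₁₂ * (L.toBlocks₂₂)⁻¹ * L.toBlocks₂₁) i j = 0 := by
    intro i
    have e1 : ∑ j, (L.toBlocks₁₂ * (L.toBlocks₂₂)⁻¹ * L.toBlocks₂₁) i j
        = - ∑ b, L.toBlocks₁₂ i b := by
      calc ∑ j, (L.toBlocks₁₂ * (L.toBlocks₂₂)⁻¹ * L.toBlocks₂₁) i j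
          = ∑ j, ∑ l, (L.toBlocks₁₂ * (L.toBlocks₂₂)⁻¹) i l * L.toBlocks₂₁ l j := by
            simp [Matrix.mul_apply]
        _ = ∑ l, ∑ j, (L.toBlocks₁₂ * (L.toBlocks₂₂)⁻¹) i l * L.toBlocks₂₁ l j :=
            Finset.sum_comm
        _ = ∑ l, (L.toBlocks₁₂ * (L.toBlocks₂₂)⁻¹) i l * ∑ j, L.toBlocks₂₁ l j := by
            simp [Finset.mul_sum]
        _ = ∑ l, (L.toBlocks₁₂ * (L.toBlocks₂₂)⁻¹) i l * (- ∑ b, L.toBlocks₂₂ l b) := by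
            refine Finset.sum_congr rfl fun l _ => ?_
            congr 1
            have key := hrow (Sum.inr l)
            rw [Fintype.sum_sum_type] at key
            simp only [Matrix.toBlocks₂₁, Matrix.toBlocks₂₂, Matrix.of_apply]
            linarith
        _ = - ∑ l, ∑ b, (L.toBlocks₁₂ * (L.toBlocks₂₂)⁻¹) i l * L.toBlocks₂₂ l b := by
            simp [Finset.mul_sum, Finset.sum_neg_distrib]
        _ = - ∑ b, ∑ l, (L.toBlocks₁₂ * (L.toBlocks₂₂)⁻¹) i l * L.toBlocks₂₂ l b := by
            rw [Finset.sum_comm]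
        _ = - ∑ b, (L.toBlocks₁₂ * (L.toBlocks₂₂)⁻¹ * L.toBlocks₂₂) i b := by
            simp [Matrix.mul_apply]
        _ = - ∑ b, L.toBlocks₁₂ i b := by
            rw [Matrix.mul_assoc, Matrix.nonsing_inv_mul _ hinv, Matrix.mul_one]
    have key := hrow (Sum.inl i)
    rw [Fintype.sum_sum_type] at key
    simp only [Matrix.sub_apply, Finset.sum_sub_distrib, e1]
    simp only [Matrix.toBlocks₁₁, Matrix.toBlocks₁₂, Matrix.of_apply]
    linarith
  -- column sums are zero
  have hcolS : ∀ j, ∑ i,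
      (L.toBlocks₁₁ - L.toBlocks₁₂ * (L.toBlocks₂₂)⁻¹ * L.toBlocks₂₁) i j = 0 := by
    intro j
    have e1 : ∑ i, (L.toBlocks₁₂ * (L.toBlocks₂₂)⁻¹ * L.toBlocks₂₁) i j
        = - ∑ b, L.toBlocks₂₁ b j := by
      calc ∑ i, (L.toBlocks₁₂ * (L.toBlocks₂₂)⁻¹ * L.toBlocks₂₁) i j
          = ∑ i, ∑ l, L.toBlocks₁₂ i l * ((L.toBlocks₂₂)⁻¹ * L.toBlocks₂₁) l j := by
            refine Finset.sum_congr rfl fun i _ => ?_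
            rw [Matrix.mul_assoc, Matrix.mul_apply]
        _ = ∑ l, ∑ i, L.toBlocks₁₂ i l * ((L.toBlocks₂₂)⁻¹ * L.toBlocks₂₁) l j :=
            Finset.sum_comm
        _ = ∑ l, (∑ i, L.toBlocks₁₂ i l) * ((L.toBlocks₂₂)⁻¹ * L.toBlocks₂₁) l j := by
            simp [Finset.sum_mul]
        _ = ∑ l, (- ∑ b, L.toBlocks₂₂ b l) * ((L.toBlocks₂₂)⁻¹ * L.toBlocks₂₁) l j := by
            refine Finset.sum_congr rfl fun l _ => ?_
            congr 1
            have key := hcol (Sum.inr l)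
            rw [Fintype.sum_sum_type] at key
            simp only [Matrix.toBlocks₁₂, Matrix.toBlocks₂₂, Matrix.of_apply]
            linarith
        _ = - ∑ l, ∑ b, L.toBlocks₂₂ b l * ((L.toBlocks₂₂)⁻¹ * L.toBlocks₂₁) l j := by
            simp [Finset.sum_mul, Finset.sum_neg_distrib]
        _ = - ∑ b, ∑ l, L.toBlocks₂₂ b l * ((L.toBlocks₂₂)⁻¹ * L.toBlocks₂₁) l j := by
            rw [Finset.sum_comm]
        _ = - ∑ b, (L.toBlocks₂₂ * ((L.toBlocks₂₂)⁻¹ * L.toBlocks₂₁)) b j := by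
            simp [Matrix.mul_apply]
        _ = - ∑ b, L.toBlocks₂₁ b j := by
            rw [← Matrix.mul_assoc, Matrix.mul_nonsing_inv _ hinv, Matrix.one_mul]
    have key := hcol (Sum.inl j)
    rw [Fintype.sum_sum_type] at key
    simp only [Matrix.sub_apply, Finset.sum_sub_distrib, e1]
    simp only [Matrix.toBlocks₁₁, Matrix.toBlocks₂₁, Matrix.of_apply]
    linarith
  -- diagonal entries
  have hdiagS : ∀ i,
      0 ≤ (L.toBlocks₁₁ - L.toBlocks₁₂ * (L.toBlocks₂₂)⁻¹ * L.toBlocks₂₁) i i := by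
    intro i
    have hsum := hrowS i
    rw [← Finset.add_sum_erase _ _ (Finset.mem_univ i)] at hsum
    have hrest : ∑ j ∈ Finset.univ.erase i,
        (L.toBlocks₁₁ - L.toBlocks₁₂ * (L.toBlocks₂₂)⁻¹ * L.toBlocks₂₁) i j ≤ 0 :=
      Finset.sum_nonpos fun j hj => hoffS i j (Finset.ne_of_mem_erase hj).symm
    linarith
  exact ⟨hoffS, hdiagS, hrowS, hcolS⟩
end

section
/- Let Z_e = [Z_1 Z_2] be a real m×(c+1) matrix with nonnegative entries partitioned according to a partition of {1,…,c+1} into retained indices 𝒱_r (with submatrix Z_1) and deleted indices 𝒱_o (with submatrix Z_2), let 𝓛 be a real (c+1)×(c+1) matrix with nonpositive off-diagonal entries and zero row and column sums, partitioned conformally as [[𝓛_11, 𝓛_12],[𝓛_21, 𝓛_22]] with 𝓛_22 invertible, and let x* ∈ ℝ^m be strictly positive. If a strictly positive x ∈ ℝ^m satisfies Z_e 𝓛 Exp(Z_eᵀ Ln(x/x*)) = 0, then it also satisfies Z_1 𝓛̂ Exp(Z_1ᵀ Ln(x/x*)) = 0, where 𝓛̂ = 𝓛_11 − 𝓛_12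 𝓛_22^{-1} 𝓛_21 is the Schur complement. In other words, the set of positive steady states of the original network is contained in the set of positive steady states of the Kron-reduced network. -/
open Matrix

lemma aux_phi (u v : ℝ) (hu : 0 < u) (hv : 0 < v) :
    0 ≤ v * Real.log v - v * Real.log u + u - v ∧
    (v * Real.log v - v * Real.log u + u - v = 0 → u = v) := by
  have hd : 0 < u / v := div_pos hu hv
  have hlog : Real.log (u / v) = Real.log u - Real.log v := Real.log_div hu.ne' hv.ne'
  have hvv : v * (u / v - 1) = u - v := by field_simp
  constructor
  · have h := Real.log_le_sub_one_of_pos hd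
    rw [hlog] at h
    have h' := mul_le_mul_of_nonneg_left h hv.le
    rw [hvv] at h'
    nlinarith
  · intro h
    by_contra hne
    have huv : u / v ≠ 1 := fun he => hne ((div_eq_one_iff_eq hv.ne').mp he)
    have h2 := Real.log_lt_sub_one_of_pos hd huv
    rw [hlog] at h2
    have h' := mul_lt_mul_of_pos_left h2 hv
    rw [hvv] at h'
    nlinarith

/-- (Proposition 4, inclusion ℰ ⊆ ℰ̂.) Every positive steady state of the original open
network `ẋ = −Z_e 𝓛 Exp(Z_eᵀ Ln(x/x*))` is a steady state of the Kron-reduced network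
obtained by taking the Schur complement of the balanced Laplacian `𝓛` with respect to the
deleted complexes and retaining the corresponding columns `Z₁` of `Z_e`. -/
theorem stmt_16 (m p q : ℕ)
    (Ze : Matrix (Fin m) (Fin p ⊕ Fin q) ℝ) (hZe : ∀ k i, 0 ≤ Ze k i)
    (L : Matrix (Fin p ⊕ Fin q) (Fin p ⊕ Fin q) ℝ)
    (hoff : ∀ i j, i ≠ j → L i j ≤ 0)
    (hrow : ∀ i, ∑ j, L i j = 0)
    (hcol : ∀ j, ∑ i, L i j = 0)
    (hinv : IsUnit (L.toBlocks₂₂).det)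
    (xs : Fin m → ℝ) (hxs : ∀ k, 0 < xs k)
    (x : Fin m → ℝ) (hx : ∀ k, 0 < x k)
    (hsteady : Ze.mulVec (L.mulVec (fun i =>
        Real.exp (Zeᵀ.mulVec (fun k => Real.log (x k / xs k)) i))) = 0) :
    (Ze.submatrix id Sum.inl).mulVec
      ((L.toBlocks₁₁ - L.toBlocks₁₂ * (L.toBlocks₂₂)⁻¹ * L.toBlocks₂₁).mulVec
        (fun i => Real.exp
          ((Ze.submatrix id Sum.inl)ᵀ.mulVec (fun k => Real.log (x k / xs k)) i))) = 0 := by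
  set y : Fin m → ℝ := fun k => Real.log (x k / xs k) with hy
  set μ : (Fin p ⊕ Fin q) → ℝ := fun i => Real.exp (Zeᵀ.mulVec y i) with hμ
  have hμpos : ∀ i, 0 < μ i := fun i => Real.exp_pos _
  have hlogμ : ∀ i, Real.log (μ i) = Zeᵀ.mulVec y i := fun i => Real.log_exp _
  -- the edge-weight matrix
  set a : (Fin p ⊕ Fin q) → (Fin p ⊕ Fin q) → ℝ :=
    fun i j => if i = j then 0 else -L i j with ha
  have hann : ∀ i j, 0 ≤ a i j := by
    intro i j
    by_cases hij : i = j
    · simp [ha, hij]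
    · simp [ha, hij]; linarith [hoff i j hij]
  have hdiag : ∀ i, ∑ j, a i j = L i i := by
    intro i
    have h1 : ∑ j, (a i j + L i j) = ∑ j, (if i = j then L i j else 0) := by
      apply Finset.sum_congr rfl
      intro j _
      by_cases hij : i = j <;> simp [ha, hij]
    rw [Finset.sum_add_distrib, hrow i, add_zero] at h1
    rw [h1, Finset.sum_ite_eq _ i (fun j => L i j)]
    simp
  have hdiag' : ∀ i, ∑ j, a j i = L i i := by
    intro i
    have h1 : ∑ j, (a j i + L j i) = ∑ j, (if j = i then L j i else 0) := by
      apply Finset.sum_congr rfl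
      intro j _
      by_cases hij : j = i <;> simp [ha, hij]
    rw [Finset.sum_add_distrib, hcol i, add_zero] at h1
    rw [h1, Finset.sum_ite_eq' _ i (fun j => L j i)]
    simp
  -- mulVec in terms of a
  have hLmv : ∀ i, L.mulVec μ i = ∑ j, a i j * (μ i - μ j) := by
    intro i
    have h1 : ∑ j, (L i j * μ j + a i j * μ j) = ∑ j, (if i = j then L i i * μ i else 0) := by
      apply Finset.sum_congr rfl
      intro j _
      by_cases hij : i = j
      · subst hij; simp [ha]
      · simp [ha, hij]
    rw [Finset.sum_add_distrib] at h1
    rw [Finset.sum_ite_eq _ i (fun _ => L i i * μ i)] at h1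
    simp only [Finset.mem_univ, if_true] at h1
    have h2 : ∑ j, a i j * (μ i - μ j) = (∑ j, a i j) * μ i - ∑ j, a i j * μ j := by
      rw [Finset.sum_mul]
      rw [← Finset.sum_sub_distrib]
      apply Finset.sum_congr rfl
      intro j _; ring
    rw [h2, hdiag i]
    simp only [Matrix.mulVec, dotProduct]
    linarith
  -- the balance swap lemma
  have hswap : ∀ f : (Fin p ⊕ Fin q) → ℝ,
      ∑ i, ∑ j, a i j * f i = ∑ i, ∑ j, a i j * f j := by
    intro f
    calc ∑ i, ∑ j, a i j * f i = ∑ i, (∑ j, a i j) * f i := by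
          apply Finset.sum_congr rfl; intro i _; rw [Finset.sum_mul]
      _ = ∑ i, (∑ j, a j i) * f i := by
          apply Finset.sum_congr rfl; intro i _; rw [hdiag i, hdiag' i]
      _ = ∑ i, ∑ j, a j i * f i := by
          apply Finset.sum_congr rfl; intro i _; rw [Finset.sum_mul]
      _ = ∑ i, ∑ j, a i j * f j := Finset.sum_comm
  -- step 1: the pairing vanishes
  have S0 : ∑ i, (Zeᵀ.mulVec y i) * (L.mulVec μ i) = 0 := by
    have hst : ∀ k, Ze.mulVec (L.mulVec μ) k = 0 := fun k => congrFun hsteady k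
    calc ∑ i, (Zeᵀ.mulVec y i) * (L.mulVec μ i)
        = ∑ i, ∑ k, y k * (Ze k i * (L.mulVec μ i)) := by
          apply Finset.sum_congr rfl
          intro i _
          simp only [Matrix.mulVec, dotProduct, Matrix.transpose_apply, Finset.sum_mul]
          apply Finset.sum_congr rfl
          intro k _; ring
      _ = ∑ k, ∑ i, y k * (Ze k i * (L.mulVec μ i)) := Finset.sum_comm
      _ = ∑ k, y k * (Ze.mulVec (L.mulVec μ) k) := by
          apply Finset.sum_congr rfl
          intro k _
          simp only [Matrix.mulVec, dotProduct, Finset.mul_sum]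
      _ = 0 := by simp [hst]
  -- rewrite as sum of nonnegative terms
  have S1 : ∑ i, ∑ j, a i j * (μ j * Real.log (μ j) - μ j * Real.log (μ i) + μ i - μ j) = 0 := by
    have e1 : ∑ i, (Zeᵀ.mulVec y i) * (L.mulVec μ i)
        = ∑ i, ∑ j, a i j * (μ i * Real.log (μ i) - μ j * Real.log (μ i)) := by
      apply Finset.sum_congr rfl
      intro i _
      rw [hLmv i, ← hlogμ i, Finset.mul_sum]
      apply Finset.sum_congr rfl
      intro j _; ring
    have e2 : ∀ i j, a i j * (μ j * Real.log (μ j) - μ j * Real.log (μ i) + μ i - μ j)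
        = a i j * (μ i * Real.log (μ i) - μ j * Real.log (μ i))
          - a i j * (μ i * Real.log (μ i)) + a i j * (μ j * Real.log (μ j))
          + a i j * μ i - a i j * μ j := by intro i j; ring
    calc ∑ i, ∑ j, a i j * (μ j * Real.log (μ j) - μ j * Real.log (μ i) + μ i - μ j)
        = (∑ i, ∑ j, a i j * (μ i * Real.log (μ i) - μ j * Real.log (μ i)))
          - (∑ i, ∑ j, a i j * (μ i * Real.log (μ i)))
          + (∑ i, ∑ j, a i j * (μ j * Real.log (μ j)))
          + (∑ i, ∑ j, a i j * μ i) - (∑ i, ∑ j, a i j * μ j) := by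
          simp only [← Finset.sum_sub_distrib, ← Finset.sum_add_distrib]
          exact Finset.sum_congr rfl fun i _ => Finset.sum_congr rfl fun j _ => e2 i j
      _ = ∑ i, ∑ j, a i j * (μ i * Real.log (μ i) - μ j * Real.log (μ i)) := by
          rw [hswap (fun i => μ i * Real.log (μ i)), hswap (fun i => μ i)]
          ring
      _ = 0 := by rw [← e1, S0]
  have hterm : ∀ i j, a i j * (μ j * Real.log (μ j) - μ j * Real.log (μ i) + μ i - μ j) = 0 := by
    have hnn : ∀ i ∈ Finset.univ, (0:ℝ) ≤
        ∑ j, a i j * (μ j * Real.log (μ j) - μ j * Real.log (μ i) + μ i - μ j) := by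
      intro i _
      apply Finset.sum_nonneg
      intro j _
      exact mul_nonneg (hann i j) (aux_phi (μ i) (μ j) (hμpos i) (hμpos j)).1
    have h := (Finset.sum_eq_zero_iff_of_nonneg hnn).mp S1
    intro i j
    have hi := h i (Finset.mem_univ i)
    have hnn2 : ∀ j ∈ Finset.univ, (0:ℝ) ≤
        a i j * (μ j * Real.log (μ j) - μ j * Real.log (μ i) + μ i - μ j) := by
      intro j _
      exact mul_nonneg (hann i j) (aux_phi (μ i) (μ j) (hμpos i) (hμpos j)).1
    exact (Finset.sum_eq_zero_iff_of_nonneg hnn2).mp hi j (Finset.mem_univ j)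
  -- deduce L μ = 0
  have hLμ : L.mulVec μ = 0 := by
    funext i
    rw [hLmv i]
    simp only [Pi.zero_apply]
    apply Finset.sum_eq_zero
    intro j _
    rcases eq_or_lt_of_le (hann i j) with h0 | h0
    · rw [← h0]; ring
    · have := hterm i j
      have hg : μ j * Real.log (μ j) - μ j * Real.log (μ i) + μ i - μ j = 0 := by
        rcases mul_eq_zero.mp this with h | h
        · exact absurd h.symm h0.ne
        · exact h
      have := (aux_phi (μ i) (μ j) (hμpos i) (hμpos j)).2 hg
      rw [this]; ring
  -- block decomposition
  set μ₁ : Fin p → ℝ := fun i => μ (Sum.inl i) with hμ₁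
  set μ₂ : Fin q → ℝ := fun i => μ (Sum.inr i) with hμ₂
  have h1 : ∀ i, L.toBlocks₁₁.mulVec μ₁ i + L.toBlocks₁₂.mulVec μ₂ i = 0 := by
    intro i
    have := congrFun hLμ (Sum.inl i)
    simp only [Matrix.mulVec, dotProduct, Fintype.sum_sum_type, Pi.zero_apply] at this ⊢
    simpa [Matrix.toBlocks₁₁, Matrix.toBlocks₁₂] using this
  have h2 : ∀ i, L.toBlocks₂₁.mulVec μ₁ i + L.toBlocks₂₂.mulVec μ₂ i = 0 := by
    intro i
    have := congrFun hLμ (Sum.inr i)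
    simp only [Matrix.mulVec, dotProduct, Fintype.sum_sum_type, Pi.zero_apply] at this ⊢
    simpa [Matrix.toBlocks₂₁, Matrix.toBlocks₂₂] using this
  have hμ₂eq : μ₂ = -(L.toBlocks₂₂⁻¹.mulVec (L.toBlocks₂₁.mulVec μ₁)) := by
    have h22 : L.toBlocks₂₂.mulVec μ₂ = -(L.toBlocks₂₁.mulVec μ₁) := by
      funext i
      have := h2 i
      simp only [Pi.neg_apply]
      linarith
    have := congrArg (L.toBlocks₂₂⁻¹.mulVec) h22
    rwa [Matrix.mulVec_mulVec, Matrix.nonsing_inv_mul _ hinv, Matrix.one_mulVec,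
      Matrix.mulVec_neg] at this
  have hschur : (L.toBlocks₁₁ - L.toBlocks₁₂ * (L.toBlocks₂₂)⁻¹ * L.toBlocks₂₁).mulVec μ₁ = 0 := by
    rw [Matrix.sub_mulVec]
    funext i
    have hrw : (L.toBlocks₁₂ * L.toBlocks₂₂⁻¹ * L.toBlocks₂₁).mulVec μ₁
        = L.toBlocks₁₂.mulVec (L.toBlocks₂₂⁻¹.mulVec (L.toBlocks₂₁.mulVec μ₁)) := by
      rw [← Matrix.mulVec_mulVec, ← Matrix.mulVec_mulVec]
    rw [hrw]
    have := h1 i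
    have h12 : L.toBlocks₁₂.mulVec μ₂ = -(L.toBlocks₁₂.mulVec
        (L.toBlocks₂₂⁻¹.mulVec (L.toBlocks₂₁.mulVec μ₁))) := by
      rw [hμ₂eq, Matrix.mulVec_neg]
    rw [h12] at this
    simp only [Pi.sub_apply, Pi.zero_apply, Pi.neg_apply] at this ⊢
    linarith
  -- identify the exponential vector with μ₁
  have hν : (fun i => Real.exp
      ((Ze.submatrix id Sum.inl)ᵀ.mulVec (fun k => Real.log (x k / xs k)) i)) = μ₁ := by
    funext i
    simp only [hμ₁, hμ]
    congr 1
  rw [hν, hschur]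
  exact Matrix.mulVec_zero _
end

section
/- Let L be a real n×n matrix whose off-diagonal entries are nonpositive and whose row sums are all zero (L𝟙 = 0), and suppose σ ∈ ℝ^n is a strictly positive vector with σᵀL = 0. Then, with Σ = diag(σ_1,…,σ_n), the symmetric matrix Σ L + Lᵀ Σ is positive semidefinite; consequently V(x) = xᵀΣx satisfies xᵀ(LᵀΣ + ΣL)x ≥ 0 for all x ∈ ℝ^n, so V is nonincreasing along the consensus dynamics ẋ = −Lx. -/
open Matrix

theorem quad_nonneg_aux {n : ℕ} (M : Matrix (Fin n) (Fin n) ℝ)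
    (hoff : ∀ i j, i ≠ j → M i j ≤ 0)
    (hrow : ∀ i, ∑ j, M i j = 0)
    (hcol : ∀ j, ∑ i, M i j = 0)
    (x : Fin n → ℝ) : 0 ≤ x ⬝ᵥ M.mulVec x := by
  have h1 : ∑ i, ∑ j, M i j * (x i)^2 = 0 := by
    simp_rw [← Finset.sum_mul]
    simp [hrow]
  have h2 : ∑ i, ∑ j, M i j * (x j)^2 = 0 := by
    rw [Finset.sum_comm]
    simp_rw [← Finset.sum_mul]
    simp [hcol]
  have key : 2 * (x ⬝ᵥ M.mulVec x) = ∑ i, ∑ j, (-M i j) * (x i - x j)^2 := by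
    have expand : ∀ i j, (-M i j) * (x i - x j)^2
        = -(M i j * (x i)^2) + 2*(x i * (M i j * x j)) - M i j * (x j)^2 := by
      intro i j; ring
    simp only [dotProduct, mulVec, Finset.mul_sum, expand]
    simp only [Finset.sum_sub_distrib, Finset.sum_add_distrib, Finset.sum_neg_distrib,
      ← Finset.mul_sum, h1, h2]
    simp [Finset.mul_sum]
  have hnn : 0 ≤ ∑ i, ∑ j, (-M i j) * (x i - x j)^2 := by
    apply Finset.sum_nonneg; intro i _
    apply Finset.sum_nonneg; intro j _
    rcases eq_or_ne i j with rfl | h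
    · simp
    · exact mul_nonneg (by linarith [hoff i j h]) (sq_nonneg _)
  linarith [key]

/-- (Section 2.6.) If `L` has nonpositive off-diagonal entries and zero row sums
(`L𝟙 = 0`), and `σ > 0` satisfies `σᵀL = 0`, then with `Σ = diag(σ)` the symmetric matrix
`ΣL + LᵀΣ` is positive semidefinite; consequently `xᵀ(LᵀΣ + ΣL)x ≥ 0` for all `x`, so
`V(x) = xᵀΣx` is nonincreasing along the consensus dynamics `ẋ = −Lx`. -/
theorem stmt_18 (n : ℕ) (L : Matrix (Fin n) (Fin n) ℝ)
    (hoff : ∀ i j, i ≠ j → L i j ≤ 0)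
    (hrow : ∀ i, ∑ j, L i j = 0)
    (σ : Fin n → ℝ) (hσ : ∀ i, 0 < σ i)
    (hσL : Matrix.vecMul σ L = 0) :
    (Matrix.diagonal σ * L + Lᵀ * Matrix.diagonal σ).PosSemidef ∧
    ∀ x : Fin n → ℝ, 0 ≤ x ⬝ᵥ (Lᵀ * Matrix.diagonal σ + Matrix.diagonal σ * L).mulVec x := by
  set M : Matrix (Fin n) (Fin n) ℝ := Matrix.diagonal σ * L + Lᵀ * Matrix.diagonal σ with hM
  have hentry : ∀ i j, M i j = σ i * L i j + L j i * σ j := by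
    intro i j
    simp [hM, Matrix.mul_apply, Matrix.diagonal, Finset.sum_ite_eq, Matrix.transpose_apply,
      Matrix.add_apply]
  have hσL' : ∀ j, ∑ i, σ i * L i j = 0 := by
    intro j
    have := congrFun hσL j
    simpa [Matrix.vecMul, dotProduct] using this
  have hMoff : ∀ i j, i ≠ j → M i j ≤ 0 := by
    intro i j h
    rw [hentry]
    have h1 : σ i * L i j ≤ 0 := mul_nonpos_of_nonneg_of_nonpos (hσ i).le (hoff i j h)
    have h2 : L j i * σ j ≤ 0 := mul_nonpos_of_nonpos_of_nonneg (hoff j i h.symm) (hσ j).le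
    linarith
  have hMrow : ∀ i, ∑ j, M i j = 0 := by
    intro i
    simp only [hentry, Finset.sum_add_distrib, ← Finset.mul_sum, hrow, mul_zero, zero_add]
    rw [show (∑ j : Fin n, L j i * σ j) = ∑ j : Fin n, σ j * L j i from
      Finset.sum_congr rfl fun j _ => mul_comm _ _]
    exact hσL' i
  have hMcol : ∀ j, ∑ i, M i j = 0 := by
    intro j
    simp only [hentry, Finset.sum_add_distrib]
    rw [hσL' j]
    rw [← Finset.sum_mul, hrow j, zero_mul, zero_add]
  have hpsd : M.PosSemidef := by
    rw [Matrix.posSemidef_iff_dotProduct_mulVec]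
    constructor
    · ext i j
      simp [Matrix.conjTranspose_apply, hentry, add_comm, mul_comm]
    · intro x
      have := quad_nonneg_aux M hMoff hMrow hMcol x
      simpa [dotProduct, mulVec] using this
  refine ⟨hpsd, ?_⟩
  intro x
  have hM2 : Lᵀ * Matrix.diagonal σ + Matrix.diagonal σ * L = M := by
    rw [hM, add_comm]
  rw [hM2]
  exact quad_nonneg_aux M hMoff hMrow hMcol x
end
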